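/- arXiv:1801.02357 — 4 statements merged into one kernel-verified Lean document; each statement's English description precedes it below -/
import Mathlib

section
/- The second-variation form of the fundamental Scherk surface evaluated at the test function φ¹(u,v) = (uv)² + 2 is negative: Q(φ¹) < 0. -/
noncomputable section
open MeasureTheory Real

/-- Dot product on `ℝ³ = ℝ × ℝ × ℝ`. -/
def dot3 (a b : ℝ × ℝ × ℝ) : ℝ := a.1 * b.1 + a.2.1 * b.2.1 + a.2.2 * b.2.2

/-- Cross product on `ℝ³ = ℝ × ℝ × ℝ`. -/
def cross3 (a b : ℝ × ℝ × ℝ) : ℝ × ℝ × ℝ :=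
  (a.2.1 * b.2.2 - a.2.2 * b.2.1, a.2.2 * b.1 - a.1 * b.2.2, a.1 * b.2.1 - a.2.1 * b.1)

/-- Euclidean norm on `ℝ³ = ℝ × ℝ × ℝ`. -/
def norm3 (a : ℝ × ℝ × ℝ) : ℝ := Real.sqrt (dot3 a a)

/-- Partial derivative in the first (`u`) variable. -/
def pdU {E : Type*} [NormedAddCommGroup E] [NormedSpace ℝ E] (f : ℝ × ℝ → E) (p : ℝ × ℝ) : E :=
  deriv (fun x => f (x, p.2)) p.1

/-- Partial derivative in the second (`v`) variable. -/
def pdV {E : Type*} [NormedAddCommGroup E] [NormedSpace ℝ E] (f : ℝ × ℝ → E) (p : ℝ × ℝ) : E :=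
  deriv (fun y => f (p.1, y)) p.2

/-- The fundamental domain `Ω₀ = (-1,1) × (-1,1)`. -/
def Ω₀ : Set (ℝ × ℝ) := Set.Ioo (-1 : ℝ) 1 ×ˢ Set.Ioo (-1 : ℝ) 1

/-- The fundamental Scherk parametrization. -/
def scherk (p : ℝ × ℝ) : ℝ × ℝ × ℝ :=
  (arctan (2 * p.1 / (p.1 ^ 2 + p.2 ^ 2 - 1)),
   arctan (-2 * p.2 / (p.1 ^ 2 + p.2 ^ 2 - 1)),
   (1 / 2) * Real.log (((p.1 ^ 2 - p.2 ^ 2 + 1) ^ 2 + 4 * p.1 ^ 2 * p.2 ^ 2) /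
     ((p.1 ^ 2 - p.2 ^ 2 - 1) ^ 2 + 4 * p.1 ^ 2 * p.2 ^ 2)))

def σu : ℝ × ℝ → ℝ × ℝ × ℝ := pdU scherk
def σv : ℝ × ℝ → ℝ × ℝ × ℝ := pdV scherk
def σuu : ℝ × ℝ → ℝ × ℝ × ℝ := pdU σu
def σuv : ℝ × ℝ → ℝ × ℝ × ℝ := pdV σu
def σvv : ℝ × ℝ → ℝ × ℝ × ℝ := pdV σv

/-- First fundamental form. -/
def g11 (p : ℝ × ℝ) : ℝ := dot3 (σu p) (σu p)
def g12 (p : ℝ × ℝ) : ℝ := dot3 (σu p) (σv p)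
def g22 (p : ℝ × ℝ) : ℝ := dot3 (σv p) (σv p)

def detg (p : ℝ × ℝ) : ℝ := g11 p * g22 p - g12 p ^ 2

/-- Components of the inverse metric `(gⁱʲ)`. -/
def ginv11 (p : ℝ × ℝ) : ℝ := g22 p / detg p
def ginv12 (p : ℝ × ℝ) : ℝ := -g12 p / detg p
def ginv22 (p : ℝ × ℝ) : ℝ := g11 p / detg p

/-- Unit normal `N = (σ_u × σ_v)/‖σ_u × σ_v‖`. -/
def NS (p : ℝ × ℝ) : ℝ × ℝ × ℝ :=
  (norm3 (cross3 (σu p) (σv p)))⁻¹ • cross3 (σu p) (σv p)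

/-- Second fundamental form. -/
def h11 (p : ℝ × ℝ) : ℝ := dot3 (σuu p) (NS p)
def h12 (p : ℝ × ℝ) : ℝ := dot3 (σuv p) (NS p)
def h22 (p : ℝ × ℝ) : ℝ := dot3 (σvv p) (NS p)

/-- Gaussian curvature. -/
def κ (p : ℝ × ℝ) : ℝ := (h11 p * h22 p - h12 p ^ 2) / detg p

/-- The second-variation quadratic form of the fundamental Scherk surface. -/
def Q (φ : ℝ × ℝ → ℝ) : ℝ :=
  ∫ p in Ω₀,
    (ginv11 p * pdU φ p ^ 2 + 2 * ginv12 p * pdU φ p * pdV φ p + ginv22 p * pdV φ p ^ 2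
      + 2 * κ p * φ p ^ 2) * Real.sqrt (detg p)

/-- The polarized second-variation bilinear form. -/
def B (φ ψ : ℝ × ℝ → ℝ) : ℝ :=
  ∫ p in Ω₀,
    (ginv11 p * pdU φ p * pdU ψ p + ginv12 p * pdU φ p * pdV ψ p
      + ginv12 p * pdV φ p * pdU ψ p + ginv22 p * pdV φ p * pdV ψ p
      + 2 * κ p * φ p * ψ p) * Real.sqrt (detg p)

/-- The test functions `φ¹, φ², φ³`. -/
def Φ : Fin 3 → (ℝ × ℝ → ℝ) :=
  ![fun p => (p.1 * p.2) ^ 2 + 2,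
    fun p => p.1 - p.1 ^ 5 / 4,
    fun p => p.2 - p.2 ^ 5 / 4]

namespace ScherkAux

def Dq (u v : ℝ) : ℝ := u ^ 2 + v ^ 2 - 1
def Sq (u v : ℝ) : ℝ := u ^ 2 + v ^ 2 + 1
def Aq (u v : ℝ) : ℝ := (u ^ 2 + v ^ 2 - 1) ^ 2 + 4 * u ^ 2
def Bq (u v : ℝ) : ℝ := (u ^ 2 + v ^ 2 - 1) ^ 2 + 4 * v ^ 2

lemma Aq_pos {u v : ℝ} (hD : Dq u v ≠ 0) : 0 < Aq u v := by
  have h : 0 < (u ^ 2 + v ^ 2 - 1) ^ 2 := by positivity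
  have h2 : (0:ℝ) ≤ 4 * u ^ 2 := by positivity
  unfold Aq; linarith

lemma Bq_pos {u v : ℝ} (hD : Dq u v ≠ 0) : 0 < Bq u v := by
  have h : 0 < (u ^ 2 + v ^ 2 - 1) ^ 2 := by positivity
  have h2 : (0:ℝ) ≤ 4 * v ^ 2 := by positivity
  unfold Bq; linarith

lemma Sq_pos (u v : ℝ) : 0 < Sq u v := by unfold Sq; positivity

def Eu (u v : ℝ) : ℝ × ℝ × ℝ :=
  (2 * (v ^ 2 - u ^ 2 - 1) / Aq u v, 4 * u * v / Bq u v,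
   2 * u * Sq u v / Aq u v - 2 * u * Dq u v / Bq u v)
def Ev (u v : ℝ) : ℝ × ℝ × ℝ :=
  (-(4 * u * v) / Aq u v, 2 * (v ^ 2 - u ^ 2 + 1) / Bq u v,
   2 * v * Dq u v / Aq u v - 2 * v * Sq u v / Bq u v)

def Fuu (u v : ℝ) : ℝ × ℝ × ℝ :=
  ((-(4 * u) * Aq u v - 2 * (v ^ 2 - u ^ 2 - 1) * (4 * u * Sq u v)) / Aq u v ^ 2,
   (4 * v * Bq u v - 4 * u * v * (4 * u * Dq u v)) / Bq u v ^ 2,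
   ((2 * Sq u v + 4 * u ^ 2) * Aq u v - 2 * u * Sq u v * (4 * u * Sq u v)) / Aq u v ^ 2
     - ((2 * Dq u v + 4 * u ^ 2) * Bq u v - 2 * u * Dq u v * (4 * u * Dq u v)) / Bq u v ^ 2)
def Fuv (u v : ℝ) : ℝ × ℝ × ℝ :=
  ((4 * v * Aq u v - 2 * (v ^ 2 - u ^ 2 - 1) * (4 * v * Dq u v)) / Aq u v ^ 2,
   (4 * u * Bq u v - 4 * u * v * (4 * v * Sq u v)) / Bq u v ^ 2,
   (4 * u * v * Aq u v - 2 * u * Sq u v * (4 * v * Dq u v)) / Aq u v ^ 2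
     - (4 * u * v * Bq u v - 2 * u * Dq u v * (4 * v * Sq u v)) / Bq u v ^ 2)
def Fvv (u v : ℝ) : ℝ × ℝ × ℝ :=
  ((-(4 * u) * Aq u v + 4 * u * v * (4 * v * Dq u v)) / Aq u v ^ 2,
   (4 * v * Bq u v - 2 * (v ^ 2 - u ^ 2 + 1) * (4 * v * Sq u v)) / Bq u v ^ 2,
   ((2 * Dq u v + 4 * v ^ 2) * Aq u v - 2 * v * Dq u v * (4 * v * Dq u v)) / Aq u v ^ 2
     - ((2 * Sq u v + 4 * v ^ 2) * Bq u v - 2 * v * Sq u v * (4 * v * Sq u v)) / Bq u v ^ 2)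


lemma comp1u (u v : ℝ) (hD : Dq u v ≠ 0) (hA : Aq u v ≠ 0) :
    HasDerivAt (fun x => arctan (2 * x / (x ^ 2 + v ^ 2 - 1)))
      (2 * (v ^ 2 - u ^ 2 - 1) / Aq u v) u := by
  have hden : HasDerivAt (fun x : ℝ => x ^ 2 + v ^ 2 - 1) (2 * u) u := by
    simpa using ((hasDerivAt_pow 2 u).add_const (v ^ 2)).sub_const 1
  have hnum : HasDerivAt (fun x : ℝ => 2 * x) 2 u := by
    simpa using (hasDerivAt_id u).const_mul 2
  have h := (hnum.fun_div hden hD).arctan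
  convert h using 1
  unfold Dq at hD; unfold Aq at hA ⊢
  field_simp; ring

lemma comp2u (u v : ℝ) (hD : Dq u v ≠ 0) (hB : Bq u v ≠ 0) :
    HasDerivAt (fun x => arctan (-2 * v / (x ^ 2 + v ^ 2 - 1)))
      (4 * u * v / Bq u v) u := by
  have hden : HasDerivAt (fun x : ℝ => x ^ 2 + v ^ 2 - 1) (2 * u) u := by
    simpa using ((hasDerivAt_pow 2 u).add_const (v ^ 2)).sub_const 1
  have h := ((hasDerivAt_const u (-2 * v)).fun_div hden hD).arctan
  convert h using 1
  unfold Dq at hD; unfold Bq at hB ⊢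
  field_simp; ring

lemma comp1v (u v : ℝ) (hD : Dq u v ≠ 0) (hA : Aq u v ≠ 0) :
    HasDerivAt (fun y => arctan (2 * u / (u ^ 2 + y ^ 2 - 1)))
      (-(4 * u * v) / Aq u v) v := by
  have hden : HasDerivAt (fun y : ℝ => u ^ 2 + y ^ 2 - 1) (2 * v) v := by
    simpa using ((hasDerivAt_pow 2 v).const_add (u ^ 2)).sub_const 1
  have h := ((hasDerivAt_const v (2 * u)).fun_div hden hD).arctan
  convert h using 1
  unfold Dq at hD; unfold Aq at hA ⊢
  field_simp; ring

lemma comp2v (u v : ℝ) (hD : Dq u v ≠ 0) (hB : Bq u v ≠ 0) :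
    HasDerivAt (fun y => arctan (-2 * y / (u ^ 2 + y ^ 2 - 1)))
      (2 * (v ^ 2 - u ^ 2 + 1) / Bq u v) v := by
  have hden : HasDerivAt (fun y : ℝ => u ^ 2 + y ^ 2 - 1) (2 * v) v := by
    simpa using ((hasDerivAt_pow 2 v).const_add (u ^ 2)).sub_const 1
  have hnum : HasDerivAt (fun y : ℝ => -2 * y) (-2) v := by
    simpa using (hasDerivAt_id v).const_mul (-2 : ℝ)
  have h := (hnum.fun_div hden hD).arctan
  convert h using 1
  unfold Dq at hD; unfold Bq at hB ⊢
  field_simp; ring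

lemma comp3v (u v : ℝ) (hD : Dq u v ≠ 0) (hA : Aq u v ≠ 0) (hB : Bq u v ≠ 0) :
    HasDerivAt (fun y => (1:ℝ) / 2 * Real.log (((u ^ 2 - y ^ 2 + 1) ^ 2 + 4 * u ^ 2 * y ^ 2) /
      ((u ^ 2 - y ^ 2 - 1) ^ 2 + 4 * u ^ 2 * y ^ 2)))
      (2 * v * Dq u v / Aq u v - 2 * v * Sq u v / Bq u v) v := by
  have hA' : ((u ^ 2 - v ^ 2 + 1) ^ 2 + 4 * u ^ 2 * v ^ 2) = Aq u v := by unfold Aq; ring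
  have hB' : ((u ^ 2 - v ^ 2 - 1) ^ 2 + 4 * u ^ 2 * v ^ 2) = Bq u v := by unfold Bq; ring
  have hsq : HasDerivAt (fun y : ℝ => y ^ 2) (2 * v) v := by simpa using hasDerivAt_pow 2 v
  have hN : HasDerivAt (fun y : ℝ => (u ^ 2 - y ^ 2 + 1) ^ 2 + 4 * u ^ 2 * y ^ 2)
      (2 * (u ^ 2 - v ^ 2 + 1) * (-(2 * v)) + 4 * u ^ 2 * (2 * v)) v := by
    have h1 : HasDerivAt (fun y : ℝ => (u ^ 2 - y ^ 2 + 1) ^ 2) (2 * (u ^ 2 - v ^ 2 + 1) * (-(2 * v))) v := by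
      have := ((hsq.const_sub (u ^ 2)).add_const 1).fun_pow 2
      simpa using this
    have h2 : HasDerivAt (fun y : ℝ => 4 * u ^ 2 * y ^ 2) (4 * u ^ 2 * (2 * v)) v :=
      hsq.const_mul _
    exact h1.fun_add h2
  have hM : HasDerivAt (fun y : ℝ => (u ^ 2 - y ^ 2 - 1) ^ 2 + 4 * u ^ 2 * y ^ 2)
      (2 * (u ^ 2 - v ^ 2 - 1) * (-(2 * v)) + 4 * u ^ 2 * (2 * v)) v := by
    have h1 : HasDerivAt (fun y : ℝ => (u ^ 2 - y ^ 2 - 1) ^ 2) (2 * (u ^ 2 - v ^ 2 - 1) * (-(2 * v))) v := by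
      have := ((hsq.const_sub (u ^ 2)).sub_const 1).fun_pow 2
      simpa using this
    have h2 : HasDerivAt (fun y : ℝ => 4 * u ^ 2 * y ^ 2) (4 * u ^ 2 * (2 * v)) v :=
      hsq.const_mul _
    exact h1.fun_add h2
  have hMne : ((u ^ 2 - v ^ 2 - 1) ^ 2 + 4 * u ^ 2 * v ^ 2) ≠ 0 := by rw [hB']; exact hB
  have hAne' : ((u ^ 2 - v ^ 2 + 1) ^ 2 + 4 * u ^ 2 * v ^ 2) ≠ 0 := by rw [hA']; exact hA
  have hfne : ((u ^ 2 - v ^ 2 + 1) ^ 2 + 4 * u ^ 2 * v ^ 2) /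
      ((u ^ 2 - v ^ 2 - 1) ^ 2 + 4 * u ^ 2 * v ^ 2) ≠ 0 := div_ne_zero hAne' hMne
  have h := ((hN.fun_div hM hMne).log hfne).const_mul ((1:ℝ)/2)
  refine h.congr_deriv ?_
  rw [hA', hB']; unfold Sq Dq
  field_simp
  ring

lemma comp3u_hasDerivAt (u v : ℝ) (hD : Dq u v ≠ 0) (hA : Aq u v ≠ 0) (hB : Bq u v ≠ 0) :
    HasDerivAt (fun x => (1:ℝ) / 2 * Real.log (((x ^ 2 - v ^ 2 + 1) ^ 2 + 4 * x ^ 2 * v ^ 2) /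
      ((x ^ 2 - v ^ 2 - 1) ^ 2 + 4 * x ^ 2 * v ^ 2)))
      (2 * u * Sq u v / Aq u v - 2 * u * Dq u v / Bq u v) u := by
  have hA' : ((u ^ 2 - v ^ 2 + 1) ^ 2 + 4 * u ^ 2 * v ^ 2) = Aq u v := by unfold Aq; ring
  have hB' : ((u ^ 2 - v ^ 2 - 1) ^ 2 + 4 * u ^ 2 * v ^ 2) = Bq u v := by unfold Bq; ring
  have hsq : HasDerivAt (fun x : ℝ => x ^ 2) (2 * u) u := by simpa using hasDerivAt_pow 2 u
  have hN : HasDerivAt (fun x : ℝ => (x ^ 2 - v ^ 2 + 1) ^ 2 + 4 * x ^ 2 * v ^ 2)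
      (2 * (u ^ 2 - v ^ 2 + 1) * (2 * u) + 4 * (2 * u) * v ^ 2) u := by
    have h1 : HasDerivAt (fun x : ℝ => (x ^ 2 - v ^ 2 + 1) ^ 2) (2 * (u ^ 2 - v ^ 2 + 1) * (2 * u)) u := by
      have := ((hsq.sub_const (v ^ 2)).add_const 1).fun_pow 2
      simpa using this
    have h2 : HasDerivAt (fun x : ℝ => 4 * x ^ 2 * v ^ 2) (4 * (2 * u) * v ^ 2) u := by
      simpa [mul_comm, mul_assoc, mul_left_comm] using (hsq.const_mul 4).mul_const (v ^ 2)
    exact h1.fun_add h2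
  have hM : HasDerivAt (fun x : ℝ => (x ^ 2 - v ^ 2 - 1) ^ 2 + 4 * x ^ 2 * v ^ 2)
      (2 * (u ^ 2 - v ^ 2 - 1) * (2 * u) + 4 * (2 * u) * v ^ 2) u := by
    have h1 : HasDerivAt (fun x : ℝ => (x ^ 2 - v ^ 2 - 1) ^ 2) (2 * (u ^ 2 - v ^ 2 - 1) * (2 * u)) u := by
      have := ((hsq.sub_const (v ^ 2)).sub_const 1).fun_pow 2
      simpa using this
    have h2 : HasDerivAt (fun x : ℝ => 4 * x ^ 2 * v ^ 2) (4 * (2 * u) * v ^ 2) u := by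
      simpa [mul_comm, mul_assoc, mul_left_comm] using (hsq.const_mul 4).mul_const (v ^ 2)
    exact h1.fun_add h2
  have hMne : ((u ^ 2 - v ^ 2 - 1) ^ 2 + 4 * u ^ 2 * v ^ 2) ≠ 0 := by rw [hB']; exact hB
  have hf := hN.fun_div hM hMne
  have hfne : ((u ^ 2 - v ^ 2 + 1) ^ 2 + 4 * u ^ 2 * v ^ 2) /
      ((u ^ 2 - v ^ 2 - 1) ^ 2 + 4 * u ^ 2 * v ^ 2) ≠ 0 := by
    rw [hA', hB']; exact div_ne_zero hA hB
  have h := (hf.log hfne).const_mul ((1:ℝ)/2)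
  refine h.congr_deriv ?_
  rw [hA', hB']; unfold Sq Dq
  have hAne' : (u ^ 2 - v ^ 2 + 1) ^ 2 + 4 * u ^ 2 * v ^ 2 ≠ 0 := by rw [hA']; exact hA
  field_simp
  ring

lemma hasDerivAt_Eu_u (u v : ℝ) (hA : Aq u v ≠ 0) (hB : Bq u v ≠ 0) :
    HasDerivAt (fun x => Eu x v) (Fuu u v) u := by
  have hsq : HasDerivAt (fun x : ℝ => x ^ 2) (2 * u) u := by simpa using hasDerivAt_pow 2 u
  have hAq : HasDerivAt (fun x : ℝ => Aq x v) (4 * u * Sq u v) u := by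
    have h1 : HasDerivAt (fun x : ℝ => (x ^ 2 + v ^ 2 - 1) ^ 2)
        (2 * (u ^ 2 + v ^ 2 - 1) * (2 * u)) u := by
      have := ((hsq.add_const (v ^ 2)).sub_const 1).fun_pow 2; simpa using this
    have h2 : HasDerivAt (fun x : ℝ => 4 * x ^ 2) (4 * (2 * u)) u := hsq.const_mul 4
    have := h1.fun_add h2
    unfold Aq Sq
    refine this.congr_deriv ?_
    ring
  have hBq : HasDerivAt (fun x : ℝ => Bq x v) (4 * u * Dq u v) u := by
    have h1 : HasDerivAt (fun x : ℝ => (x ^ 2 + v ^ 2 - 1) ^ 2)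
        (2 * (u ^ 2 + v ^ 2 - 1) * (2 * u)) u := by
      have := ((hsq.add_const (v ^ 2)).sub_const 1).fun_pow 2; simpa using this
    have := h1.add_const (4 * v ^ 2)
    unfold Bq Dq
    refine this.congr_deriv ?_; ring
  have c1 : HasDerivAt (fun x => 2 * (v ^ 2 - x ^ 2 - 1) / Aq x v) (Fuu u v).1 u := by
    have hnum : HasDerivAt (fun x : ℝ => 2 * (v ^ 2 - x ^ 2 - 1)) (2 * (-(2 * u))) u := by
      exact ((hsq.const_sub (v ^ 2)).sub_const 1).const_mul 2
    have := hnum.fun_div hAq hA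
    unfold Fuu
    refine this.congr_deriv ?_ <;> ring
  have c2 : HasDerivAt (fun x => 4 * x * v / Bq x v) (Fuu u v).2.1 u := by
    have hnum : HasDerivAt (fun x : ℝ => 4 * x * v) (4 * v) u := by
      have := ((hasDerivAt_id u).const_mul 4).mul_const v
      simpa [mul_assoc] using this
    have := hnum.fun_div hBq hB
    unfold Fuu
    convert this using 1 <;> ring
  have c3 : HasDerivAt (fun x => 2 * x * Sq x v / Aq x v - 2 * x * Dq x v / Bq x v)
      (Fuu u v).2.2 u := by
    have hS : HasDerivAt (fun x : ℝ => Sq x v) (2 * u) u := by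
      unfold Sq; exact (hsq.add_const (v ^ 2)).add_const 1
    have hDd : HasDerivAt (fun x : ℝ => Dq x v) (2 * u) u := by
      unfold Dq; exact (hsq.add_const (v ^ 2)).sub_const 1
    have hN1 : HasDerivAt (fun x : ℝ => 2 * x * Sq x v) (2 * Sq u v + 2 * u * (2 * u)) u := by
      have h2x : HasDerivAt (fun x : ℝ => 2 * x) 2 u := by
        simpa using (hasDerivAt_id u).const_mul (2:ℝ)
      exact h2x.fun_mul hS
    have hN2 : HasDerivAt (fun x : ℝ => 2 * x * Dq x v) (2 * Dq u v + 2 * u * (2 * u)) u := by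
      have h2x : HasDerivAt (fun x : ℝ => 2 * x) 2 u := by
        simpa using (hasDerivAt_id u).const_mul (2:ℝ)
      exact h2x.fun_mul hDd
    have := (hN1.fun_div hAq hA).fun_sub (hN2.fun_div hBq hB)
    unfold Fuu
    refine this.congr_deriv ?_ <;> ring
  exact c1.prodMk (c2.prodMk c3)

lemma hasDerivAt_Eu_v (u v : ℝ) (hA : Aq u v ≠ 0) (hB : Bq u v ≠ 0) :
    HasDerivAt (fun y => Eu u y) (Fuv u v) v := by
  have hsq : HasDerivAt (fun y : ℝ => y ^ 2) (2 * v) v := by simpa using hasDerivAt_pow 2 v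
  have hAq : HasDerivAt (fun y : ℝ => Aq u y) (4 * v * Dq u v) v := by
    have h1 : HasDerivAt (fun y : ℝ => (u ^ 2 + y ^ 2 - 1) ^ 2)
        (2 * (u ^ 2 + v ^ 2 - 1) * (2 * v)) v := by
      have := ((hsq.const_add (u ^ 2)).sub_const 1).fun_pow 2; simpa using this
    have := h1.add_const (4 * u ^ 2)
    unfold Aq Dq
    refine this.congr_deriv ?_
    ring
  have hBq : HasDerivAt (fun y : ℝ => Bq u y) (4 * v * Sq u v) v := by
    have h1 : HasDerivAt (fun y : ℝ => (u ^ 2 + y ^ 2 - 1) ^ 2)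
        (2 * (u ^ 2 + v ^ 2 - 1) * (2 * v)) v := by
      have := ((hsq.const_add (u ^ 2)).sub_const 1).fun_pow 2; simpa using this
    have h2 : HasDerivAt (fun y : ℝ => 4 * y ^ 2) (4 * (2 * v)) v := hsq.const_mul 4
    have := h1.fun_add h2
    unfold Bq Sq
    refine this.congr_deriv ?_
    ring
  have hS : HasDerivAt (fun y : ℝ => Sq u y) (2 * v) v := by
    unfold Sq; exact (hsq.const_add (u ^ 2)).add_const 1
  have hDd : HasDerivAt (fun y : ℝ => Dq u y) (2 * v) v := by
    unfold Dq; exact (hsq.const_add (u ^ 2)).sub_const 1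
  have c1 : HasDerivAt (fun y => 2 * (y ^ 2 - u ^ 2 - 1) / Aq u y) (Fuv u v).1 v := by
    have hnum : HasDerivAt (fun y : ℝ => 2 * (y ^ 2 - u ^ 2 - 1)) (2 * (2 * v)) v :=
      ((hsq.sub_const (u ^ 2)).sub_const 1).const_mul 2
    have := hnum.fun_div hAq hA
    unfold Fuv
    refine this.congr_deriv ?_ <;> ring
  have c2 : HasDerivAt (fun y => 4 * u * y / Bq u y) (Fuv u v).2.1 v := by
    have hnum : HasDerivAt (fun y : ℝ => 4 * u * y) (4 * u) v := by
      simpa using (hasDerivAt_id v).const_mul (4 * u)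
    have := hnum.fun_div hBq hB
    unfold Fuv
    convert this using 1 <;> ring
  have c3 : HasDerivAt (fun y => 2 * u * Sq u y / Aq u y - 2 * u * Dq u y / Bq u y)
      (Fuv u v).2.2 v := by
    have hN1 : HasDerivAt (fun y : ℝ => 2 * u * Sq u y) (2 * u * (2 * v)) v := hS.const_mul _
    have hN2 : HasDerivAt (fun y : ℝ => 2 * u * Dq u y) (2 * u * (2 * v)) v := hDd.const_mul _
    have := (hN1.fun_div hAq hA).fun_sub (hN2.fun_div hBq hB)
    unfold Fuv
    refine this.congr_deriv ?_ <;> ring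
  have h1 : HasDerivAt (fun y => (2 * (y ^ 2 - u ^ 2 - 1) / Aq u y, 4 * u * y / Bq u y,
      2 * u * Sq u y / Aq u y - 2 * u * Dq u y / Bq u y)) (Fuv u v) v := by
    have := c1.prodMk (c2.prodMk c3)
    convert this using 1
  exact h1

lemma hasDerivAt_Ev_v (u v : ℝ) (hA : Aq u v ≠ 0) (hB : Bq u v ≠ 0) :
    HasDerivAt (fun y => Ev u y) (Fvv u v) v := by
  have hsq : HasDerivAt (fun y : ℝ => y ^ 2) (2 * v) v := by simpa using hasDerivAt_pow 2 v
  have hAq : HasDerivAt (fun y : ℝ => Aq u y) (4 * v * Dq u v) v := by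
    have h1 : HasDerivAt (fun y : ℝ => (u ^ 2 + y ^ 2 - 1) ^ 2)
        (2 * (u ^ 2 + v ^ 2 - 1) * (2 * v)) v := by
      have := ((hsq.const_add (u ^ 2)).sub_const 1).fun_pow 2; simpa using this
    have := h1.add_const (4 * u ^ 2)
    unfold Aq Dq
    refine this.congr_deriv ?_
    ring
  have hBq : HasDerivAt (fun y : ℝ => Bq u y) (4 * v * Sq u v) v := by
    have h1 : HasDerivAt (fun y : ℝ => (u ^ 2 + y ^ 2 - 1) ^ 2)
        (2 * (u ^ 2 + v ^ 2 - 1) * (2 * v)) v := by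
      have := ((hsq.const_add (u ^ 2)).sub_const 1).fun_pow 2; simpa using this
    have h2 : HasDerivAt (fun y : ℝ => 4 * y ^ 2) (4 * (2 * v)) v := hsq.const_mul 4
    have := h1.fun_add h2
    unfold Bq Sq
    refine this.congr_deriv ?_
    ring
  have hS : HasDerivAt (fun y : ℝ => Sq u y) (2 * v) v := by
    unfold Sq; exact (hsq.const_add (u ^ 2)).add_const 1
  have hDd : HasDerivAt (fun y : ℝ => Dq u y) (2 * v) v := by
    unfold Dq; exact (hsq.const_add (u ^ 2)).sub_const 1
  have c1 : HasDerivAt (fun y => -(4 * u * y) / Aq u y) (Fvv u v).1 v := by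
    have hnum : HasDerivAt (fun y : ℝ => -(4 * u * y)) (-(4 * u)) v := by
      simpa using ((hasDerivAt_id v).const_mul (4 * u)).fun_neg
    have := hnum.fun_div hAq hA
    unfold Fvv
    refine this.congr_deriv ?_ <;> ring
  have c2 : HasDerivAt (fun y => 2 * (y ^ 2 - u ^ 2 + 1) / Bq u y) (Fvv u v).2.1 v := by
    have hnum : HasDerivAt (fun y : ℝ => 2 * (y ^ 2 - u ^ 2 + 1)) (2 * (2 * v)) v :=
      ((hsq.sub_const (u ^ 2)).add_const 1).const_mul 2
    have := hnum.fun_div hBq hB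
    unfold Fvv
    refine this.congr_deriv ?_ <;> ring
  have c3 : HasDerivAt (fun y => 2 * y * Dq u y / Aq u y - 2 * y * Sq u y / Bq u y)
      (Fvv u v).2.2 v := by
    have h2y : HasDerivAt (fun y : ℝ => 2 * y) 2 v := by
      simpa using (hasDerivAt_id v).const_mul (2:ℝ)
    have hN1 : HasDerivAt (fun y : ℝ => 2 * y * Dq u y) (2 * Dq u v + 2 * v * (2 * v)) v :=
      h2y.fun_mul hDd
    have hN2 : HasDerivAt (fun y : ℝ => 2 * y * Sq u y) (2 * Sq u v + 2 * v * (2 * v)) v :=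
      h2y.fun_mul hS
    have := (hN1.fun_div hAq hA).fun_sub (hN2.fun_div hBq hB)
    unfold Fvv
    refine this.congr_deriv ?_ <;> ring
  exact c1.prodMk (c2.prodMk c3)



lemma sigma_u_eq {u v : ℝ} (hD : Dq u v ≠ 0) : σu (u, v) = Eu u v := by
  have hA := (Aq_pos hD).ne'
  have hB := (Bq_pos hD).ne'
  have h1 := comp1u u v hD hA
  have h2 := comp2u u v hD hB
  have h3 := comp3u_hasDerivAt u v hD hA hB
  have h : HasDerivAt (fun x => scherk (x, v)) (Eu u v) u := h1.prodMk (h2.prodMk h3)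
  exact h.deriv

lemma sigma_v_eq {u v : ℝ} (hD : Dq u v ≠ 0) : σv (u, v) = Ev u v := by
  have hA := (Aq_pos hD).ne'
  have hB := (Bq_pos hD).ne'
  have h1 := comp1v u v hD hA
  have h2 := comp2v u v hD hB
  have h3 := comp3v u v hD hA hB
  have h : HasDerivAt (fun y => scherk (u, y)) (Ev u v) v := h1.prodMk (h2.prodMk h3)
  exact h.deriv

lemma eventually_Dq_u {u v : ℝ} (hD : Dq u v ≠ 0) :
    ∀ᶠ x in nhds u, Dq x v ≠ 0 := by
  have hc : ContinuousAt (fun x : ℝ => Dq x v) u := by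
    unfold Dq; fun_prop
  exact hc.eventually_ne hD

lemma eventually_Dq_v {u v : ℝ} (hD : Dq u v ≠ 0) :
    ∀ᶠ y in nhds v, Dq u y ≠ 0 := by
  have hc : ContinuousAt (fun y : ℝ => Dq u y) v := by
    unfold Dq; fun_prop
  exact hc.eventually_ne hD

lemma sigma_uu_eq {u v : ℝ} (hD : Dq u v ≠ 0) : σuu (u, v) = Fuu u v := by
  have hA := (Aq_pos hD).ne'
  have hB := (Bq_pos hD).ne'
  have hev : (fun x => σu (x, v)) =ᶠ[nhds u] (fun x => Eu x v) :=
    (eventually_Dq_u hD).mono fun x hx => sigma_u_eq hx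
  have : σuu (u, v) = deriv (fun x => Eu x v) u := hev.deriv_eq
  rw [this]
  exact (hasDerivAt_Eu_u u v hA hB).deriv

lemma sigma_uv_eq {u v : ℝ} (hD : Dq u v ≠ 0) : σuv (u, v) = Fuv u v := by
  have hA := (Aq_pos hD).ne'
  have hB := (Bq_pos hD).ne'
  have hev : (fun y => σu (u, y)) =ᶠ[nhds v] (fun y => Eu u y) :=
    (eventually_Dq_v hD).mono fun y hy => sigma_u_eq hy
  have : σuv (u, v) = deriv (fun y => Eu u y) v := hev.deriv_eq
  rw [this]
  exact (hasDerivAt_Eu_v u v hA hB).deriv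

lemma sigma_vv_eq {u v : ℝ} (hD : Dq u v ≠ 0) : σvv (u, v) = Fvv u v := by
  have hA := (Aq_pos hD).ne'
  have hB := (Bq_pos hD).ne'
  have hev : (fun y => σv (u, y)) =ᶠ[nhds v] (fun y => Ev u y) :=
    (eventually_Dq_v hD).mono fun y hy => sigma_v_eq hy
  have : σvv (u, v) = deriv (fun y => Ev u y) v := hev.deriv_eq
  rw [this]
  exact (hasDerivAt_Ev_v u v hA hB).deriv


lemma cross_eq {u v : ℝ} (hD : Dq u v ≠ 0) :
    cross3 (Eu u v) (Ev u v) =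
      (-(8 * u * Sq u v) / (Aq u v * Bq u v), -(8 * v * Sq u v) / (Aq u v * Bq u v),
        4 * Sq u v * Dq u v / (Aq u v * Bq u v)) := by
  have hA := (Aq_pos hD).ne'
  have hB := (Bq_pos hD).ne'
  unfold cross3 Eu Ev
  refine Prod.ext ?_ (Prod.ext ?_ ?_) <;>
    · simp only []
      unfold Aq Bq Sq Dq at *
      field_simp
      ring

lemma dot_cross_eq {u v : ℝ} (hD : Dq u v ≠ 0) :
    dot3 (cross3 (Eu u v) (Ev u v)) (cross3 (Eu u v) (Ev u v)) =
      (4 * Sq u v ^ 2 / (Aq u v * Bq u v)) ^ 2 := by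
  have hA := (Aq_pos hD).ne'
  have hB := (Bq_pos hD).ne'
  rw [cross_eq hD]
  unfold dot3
  simp only []
  unfold Aq Bq Sq Dq at *
  field_simp
  ring

lemma norm_cross_eq {u v : ℝ} (hD : Dq u v ≠ 0) :
    norm3 (cross3 (Eu u v) (Ev u v)) = 4 * Sq u v ^ 2 / (Aq u v * Bq u v) := by
  have hpos : 0 < 4 * Sq u v ^ 2 / (Aq u v * Bq u v) := by
    have := Aq_pos hD; have := Bq_pos hD; have := Sq_pos u v; positivity
  unfold norm3
  rw [dot_cross_eq hD]
  exact Real.sqrt_sq hpos.le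

lemma NS_eq {u v : ℝ} (hD : Dq u v ≠ 0) :
    NS (u, v) = (-(2 * u) / Sq u v, -(2 * v) / Sq u v, Dq u v / Sq u v) := by
  have hA := (Aq_pos hD).ne'
  have hB := (Bq_pos hD).ne'
  have hS := (Sq_pos u v).ne'
  unfold NS
  rw [sigma_u_eq hD, sigma_v_eq hD, norm_cross_eq hD, cross_eq hD]
  have h4 : (4 * Sq u v ^ 2 / (Aq u v * Bq u v)) ≠ 0 := by
    have := Aq_pos hD; have := Bq_pos hD; have := Sq_pos u v; positivity
  refine Prod.ext ?_ (Prod.ext ?_ ?_) <;>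
    · simp only [Prod.smul_fst, Prod.smul_snd, smul_eq_mul]
      field_simp <;> ring


lemma g11_eq {u v : ℝ} (hD : Dq u v ≠ 0) :
    g11 (u, v) = 4 * Sq u v ^ 2 / (Aq u v * Bq u v) := by
  have hA := (Aq_pos hD).ne'
  have hB := (Bq_pos hD).ne'
  unfold g11
  rw [sigma_u_eq hD]
  unfold dot3 Eu
  simp only []
  unfold Aq Bq Sq Dq at *
  field_simp
  ring

lemma g22_eq {u v : ℝ} (hD : Dq u v ≠ 0) :
    g22 (u, v) = 4 * Sq u v ^ 2 / (Aq u v * Bq u v) := by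
  have hA := (Aq_pos hD).ne'
  have hB := (Bq_pos hD).ne'
  unfold g22
  rw [sigma_v_eq hD]
  unfold dot3 Ev
  simp only []
  unfold Aq Bq Sq Dq at *
  field_simp
  ring

lemma g12_eq {u v : ℝ} (hD : Dq u v ≠ 0) : g12 (u, v) = 0 := by
  have hA := (Aq_pos hD).ne'
  have hB := (Bq_pos hD).ne'
  unfold g12
  rw [sigma_u_eq hD, sigma_v_eq hD]
  unfold dot3 Eu Ev
  simp only []
  unfold Aq Bq Sq Dq at *
  field_simp
  ring

lemma detg_eq {u v : ℝ} (hD : Dq u v ≠ 0) :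
    detg (u, v) = (4 * Sq u v ^ 2 / (Aq u v * Bq u v)) ^ 2 := by
  unfold detg
  rw [g11_eq hD, g22_eq hD, g12_eq hD]
  ring

lemma sqrt_detg_eq {u v : ℝ} (hD : Dq u v ≠ 0) :
    Real.sqrt (detg (u, v)) = 4 * Sq u v ^ 2 / (Aq u v * Bq u v) := by
  have hpos : 0 < 4 * Sq u v ^ 2 / (Aq u v * Bq u v) := by
    have := Aq_pos hD; have := Bq_pos hD; have := Sq_pos u v; positivity
  rw [detg_eq hD]
  exact Real.sqrt_sq hpos.le

lemma h11_eq {u v : ℝ} (hD : Dq u v ≠ 0) :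
    h11 (u, v) = 4 * (u ^ 4 - 6 * u ^ 2 * v ^ 2 + v ^ 4 - 1) / (Aq u v * Bq u v) := by
  have hA := (Aq_pos hD).ne'
  have hB := (Bq_pos hD).ne'
  have hS := (Sq_pos u v).ne'
  unfold h11
  rw [sigma_uu_eq hD, NS_eq hD]
  unfold dot3 Fuu
  simp only []
  unfold Aq Bq Sq Dq at *
  field_simp
  ring

lemma h12_eq {u v : ℝ} (hD : Dq u v ≠ 0) :
    h12 (u, v) = 16 * u * v * (u ^ 2 - v ^ 2) / (Aq u v * Bq u v) := by
  have hA := (Aq_pos hD).ne'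
  have hB := (Bq_pos hD).ne'
  have hS := (Sq_pos u v).ne'
  unfold h12
  rw [sigma_uv_eq hD, NS_eq hD]
  unfold dot3 Fuv
  simp only []
  unfold Aq Bq Sq Dq at *
  field_simp
  ring

lemma h22_eq {u v : ℝ} (hD : Dq u v ≠ 0) :
    h22 (u, v) = -(4 * (u ^ 4 - 6 * u ^ 2 * v ^ 2 + v ^ 4 - 1)) / (Aq u v * Bq u v) := by
  have hA := (Aq_pos hD).ne'
  have hB := (Bq_pos hD).ne'
  have hS := (Sq_pos u v).ne'
  unfold h22
  rw [sigma_vv_eq hD, NS_eq hD]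
  unfold dot3 Fvv
  simp only []
  unfold Aq Bq Sq Dq at *
  field_simp
  ring

lemma kappa_eq {u v : ℝ} (hD : Dq u v ≠ 0) :
    κ (u, v) = -(Aq u v * Bq u v) / Sq u v ^ 4 := by
  have hA := (Aq_pos hD).ne'
  have hB := (Bq_pos hD).ne'
  have hS := (Sq_pos u v).ne'
  unfold κ
  rw [h11_eq hD, h12_eq hD, h22_eq hD, detg_eq hD]
  unfold Aq Bq Sq Dq at *
  rw [div_eq_div_iff (by positivity) (by positivity)]
  field_simp
  ring


def φ₁ : ℝ × ℝ → ℝ := fun p => (p.1 * p.2) ^ 2 + 2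

lemma pdU_phi (u v : ℝ) : pdU φ₁ (u, v) = 2 * u * v ^ 2 := by
  have h : HasDerivAt (fun x : ℝ => (x * v) ^ 2 + 2) (2 * u * v ^ 2) u := by
    have h1 : HasDerivAt (fun x : ℝ => x * v) v u := by
      simpa using (hasDerivAt_id u).mul_const v
    have := (h1.fun_pow 2).add_const 2
    refine this.congr_deriv ?_
    ring
  exact h.deriv

lemma pdV_phi (u v : ℝ) : pdV φ₁ (u, v) = 2 * u ^ 2 * v := by
  have h : HasDerivAt (fun y : ℝ => (u * y) ^ 2 + 2) (2 * u ^ 2 * v) v := by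
    have h1 : HasDerivAt (fun y : ℝ => u * y) u v := by
      simpa using (hasDerivAt_id v).const_mul u
    have := (h1.fun_pow 2).add_const 2
    refine this.congr_deriv ?_
    ring
  exact h.deriv

/-- The closed-form integrand. -/
def Fint (p : ℝ × ℝ) : ℝ :=
  4 * p.1 ^ 2 * p.2 ^ 2 * (p.1 ^ 2 + p.2 ^ 2)
    - 8 * ((p.1 * p.2) ^ 2 + 2) ^ 2 / (p.1 ^ 2 + p.2 ^ 2 + 1) ^ 2

lemma integrand_eq {u v : ℝ} (hD : Dq u v ≠ 0) :
    (ginv11 (u, v) * pdU φ₁ (u, v) ^ 2 +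
        2 * ginv12 (u, v) * pdU φ₁ (u, v) * pdV φ₁ (u, v) +
        ginv22 (u, v) * pdV φ₁ (u, v) ^ 2 + 2 * κ (u, v) * φ₁ (u, v) ^ 2) *
      Real.sqrt (detg (u, v)) = Fint (u, v) := by
  have hA := (Aq_pos hD).ne'
  have hB := (Bq_pos hD).ne'
  have hS := (Sq_pos u v).ne'
  have hdet : detg (u, v) ≠ 0 := by
    rw [detg_eq hD]
    have := Aq_pos hD; have := Bq_pos hD; have := Sq_pos u v
    positivity
  unfold ginv11 ginv12 ginv22
  rw [pdU_phi, pdV_phi, sqrt_detg_eq hD, g11_eq hD, g22_eq hD, g12_eq hD, detg_eq hD,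
    kappa_eq hD]
  unfold Fint φ₁
  simp only []
  unfold Aq Bq Sq Dq at *
  field_simp
  ring


lemma circle_null : (volume : Measure (ℝ × ℝ)) {p : ℝ × ℝ | Dq p.1 p.2 = 0} = 0 := by
  have hmeas : MeasurableSet {p : ℝ × ℝ | Dq p.1 p.2 = 0} := by
    have hc : Continuous fun p : ℝ × ℝ => Dq p.1 p.2 := by unfold Dq; fun_prop
    exact hc.measurable (measurableSet_singleton 0)
  have h0 : ((volume : Measure ℝ).prod (volume : Measure ℝ)) {p : ℝ × ℝ | Dq p.1 p.2 = 0}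
      = 0 := by
    rw [Measure.measure_prod_null hmeas]
    refine Filter.Eventually.of_forall fun x => ?_
    have hsub : Prod.mk x ⁻¹' {p : ℝ × ℝ | Dq p.1 p.2 = 0} ⊆
        {Real.sqrt (1 - x ^ 2), -Real.sqrt (1 - x ^ 2)} := by
      intro y hy
      simp only [Set.mem_preimage, Set.mem_setOf_eq] at hy
      unfold Dq at hy
      have hy2 : y ^ 2 = 1 - x ^ 2 := by linarith
      have hnn : 0 ≤ 1 - x ^ 2 := by nlinarith [sq_nonneg y]
      have hs : Real.sqrt (1 - x ^ 2) ^ 2 = 1 - x ^ 2 := Real.sq_sqrt hnn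
      have : (y - Real.sqrt (1 - x ^ 2)) * (y + Real.sqrt (1 - x ^ 2)) = 0 := by
        linear_combination hy2 - hs
      rcases mul_eq_zero.mp this with h | h
      · left; linarith
      · right; simp only [Set.mem_singleton_iff]; linarith
    have hfin : ({Real.sqrt (1 - x ^ 2), -Real.sqrt (1 - x ^ 2)} : Set ℝ).Finite :=
      (Set.finite_singleton _).insert _
    exact measure_mono_null hsub (hfin.measure_zero volume)
  exact h0

lemma ae_Dq_ne : ∀ᵐ p : ℝ × ℝ, Dq p.1 p.2 ≠ 0 := by
  rw [MeasureTheory.ae_iff]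
  convert circle_null using 2
  simp

lemma Q_eq : Q (fun p => (p.1 * p.2) ^ 2 + 2) = ∫ p in Ω₀, Fint p := by
  unfold Q
  refine MeasureTheory.setIntegral_congr_ae
    (MeasurableSet.prod measurableSet_Ioo measurableSet_Ioo) ?_
  filter_upwards [ae_Dq_ne] with p hp _
  have := integrand_eq (u := p.1) (v := p.2) hp
  exact this

lemma Fint_continuous : Continuous Fint := by
  unfold Fint
  refine Continuous.sub (by fun_prop) (Continuous.div (by fun_prop) (by fun_prop) ?_)
  intro p
  positivity

def Gb (p : ℝ × ℝ) : ℝ := 8 * p.1 ^ 2 * p.2 ^ 2 - 32 / 9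

lemma Fint_le_Gb {p : ℝ × ℝ} (hp : p ∈ Ω₀) : Fint p ≤ Gb p := by
  obtain ⟨⟨hu1, hu2⟩, hv1, hv2⟩ := hp
  set u := p.1; set v := p.2
  have hu : u ^ 2 ≤ 1 := by nlinarith
  have hv : v ^ 2 ≤ 1 := by nlinarith
  have hSpos : (0:ℝ) < (u ^ 2 + v ^ 2 + 1) ^ 2 := by positivity
  have h1 : 32 / 9 ≤ 8 * ((u * v) ^ 2 + 2) ^ 2 / (u ^ 2 + v ^ 2 + 1) ^ 2 := by
    rw [le_div_iff₀ hSpos]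
    nlinarith [sq_nonneg (u * v), sq_nonneg (u * v * (u ^ 2 + v ^ 2 + 1))]
  have h2 : 4 * u ^ 2 * v ^ 2 * (u ^ 2 + v ^ 2) ≤ 8 * u ^ 2 * v ^ 2 := by
    nlinarith [sq_nonneg (u * v), mul_nonneg (sq_nonneg u) (sq_nonneg v)]
  unfold Fint Gb
  have : (p.1 * p.2) ^ 2 = u ^ 2 * v ^ 2 := by ring
  linarith

lemma integrableOn_of_continuous {f : ℝ × ℝ → ℝ} (hf : Continuous f) :
    IntegrableOn f Ω₀ volume := by
  have hK : IsCompact ((Set.Icc (-1:ℝ) 1) ×ˢ (Set.Icc (-1:ℝ) 1)) :=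
    isCompact_Icc.prod isCompact_Icc
  have := hf.continuousOn.integrableOn_compact (μ := volume)
    (K := (Set.Icc (-1:ℝ) 1) ×ˢ (Set.Icc (-1:ℝ) 1)) hK
  exact this.mono_set (Set.prod_mono Set.Ioo_subset_Icc_self Set.Ioo_subset_Icc_self)

lemma Gb_continuous : Continuous Gb := by unfold Gb; fun_prop

lemma integral_sq_Ioo : ∫ x in Set.Ioo (-1:ℝ) 1, x ^ 2 = 2 / 3 := by
  rw [← MeasureTheory.integral_Ioc_eq_integral_Ioo,
    ← intervalIntegral.integral_of_le (by norm_num : (-1:ℝ) ≤ 1)]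
  rw [integral_pow]
  norm_num

lemma restrict_eq : (volume : Measure (ℝ × ℝ)).restrict Ω₀ =
    ((volume : Measure ℝ).restrict (Set.Ioo (-1) 1)).prod
      ((volume : Measure ℝ).restrict (Set.Ioo (-1) 1)) := by
  rw [Measure.prod_restrict, ← Measure.volume_eq_prod]
  rfl

lemma integral_Gb : ∫ p in Ω₀, Gb p = -96 / 9 := by
  have h1 : IntegrableOn (fun p : ℝ × ℝ => 8 * p.1 ^ 2 * p.2 ^ 2) Ω₀ volume :=
    integrableOn_of_continuous (by fun_prop)
  have h2 : IntegrableOn (fun _ : ℝ × ℝ => (32:ℝ) / 9) Ω₀ volume :=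
    integrableOn_of_continuous continuous_const
  have hsplit : ∫ p in Ω₀, Gb p = (∫ p in Ω₀, 8 * p.1 ^ 2 * p.2 ^ 2) - ∫ _ in Ω₀, (32:ℝ)/9 := by
    rw [← MeasureTheory.integral_sub h1 h2]
    rfl
  have hprod : ∫ p in Ω₀, 8 * p.1 ^ 2 * p.2 ^ 2 = 32 / 9 := by
    have key := MeasureTheory.integral_prod_mul
      (μ := (volume : Measure ℝ).restrict (Set.Ioo (-1) 1))
      (ν := (volume : Measure ℝ).restrict (Set.Ioo (-1) 1))
      (fun x : ℝ => 8 * x ^ 2) (fun y : ℝ => y ^ 2)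
    rw [restrict_eq]
    rw [key]
    have ha : ∫ x in Set.Ioo (-1:ℝ) 1, 8 * x ^ 2 = 16 / 3 := by
      rw [MeasureTheory.integral_const_mul, integral_sq_Ioo]; norm_num
    rw [ha, integral_sq_Ioo]
    norm_num
  have hconst : ∫ _ in Ω₀, (32:ℝ)/9 = 128 / 9 := by
    rw [MeasureTheory.setIntegral_const]
    have : (volume : Measure (ℝ × ℝ)) Ω₀ = 4 := by
      rw [Measure.volume_eq_prod]
      unfold Ω₀
      rw [Measure.prod_prod, Real.volume_Ioo]
      rw [← ENNReal.ofReal_mul (by norm_num)]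
      norm_num
    rw [measureReal_def, this]
    norm_num
  rw [hsplit, hprod, hconst]
  norm_num

end ScherkAux

/-- the second variation of the fundamental Scherk surface at
`φ¹(u,v) = (uv)² + 2` is negative. -/
theorem scherk_secondVariation_phi1_neg : Q (fun p => (p.1 * p.2) ^ 2 + 2) < 0 := by
  rw [ScherkAux.Q_eq]
  have hmono : ∫ p in Ω₀, ScherkAux.Fint p ≤ ∫ p in Ω₀, ScherkAux.Gb p := by
    refine MeasureTheory.setIntegral_mono_on
      (ScherkAux.integrableOn_of_continuous ScherkAux.Fint_continuous)
      (ScherkAux.integrableOn_of_continuous ScherkAux.Gb_continuous)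
      (MeasurableSet.prod measurableSet_Ioo measurableSet_Ioo) fun p hp =>
      ScherkAux.Fint_le_Gb hp
  have := ScherkAux.integral_Gb
  linarith
end
end

section
/- The test functions φ¹, φ², φ³ are pairwise orthogonal for the polarized second-variation form of the fundamental Scherk surface: for all k ≠ m in {1,2,3}, B(φ^k, φ^m) = ∫_{Ω₀} (Σ_{i,j=1,2} g^{ij} ∂_iφ^k ∂_jφ^m + 2κ φ^k φ^m)·√(g₁₁g₂₂ − g₁₂²) du dv = 0. -/
noncomputable section
open MeasureTheory Real

/-! ### Auxiliary material -/

/-- Composing with a continuous linear equivalence commutes with `deriv`,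
with no differentiability hypothesis. -/
lemma deriv_clequiv {E F : Type*} [NormedAddCommGroup E] [NormedSpace ℝ E]
    [NormedAddCommGroup F] [NormedSpace ℝ F]
    (e : E ≃L[ℝ] F) (g : ℝ → E) (x : ℝ) :
    deriv (fun t => e (g t)) x = e (deriv g x) := by
  by_cases h : DifferentiableAt ℝ g x
  · exact (e.hasFDerivAt.comp_hasDerivAt x h.hasDerivAt).deriv
  · have h2 : ¬ DifferentiableAt ℝ (fun t => e (g t)) x := by
      intro hc
      exact h ((e.comp_differentiableAt_iff (f := g)).mp hc)
    rw [deriv_zero_of_not_differentiableAt h2, deriv_zero_of_not_differentiableAt h, map_zero]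

/-- Sign-flip equivalences on ℝ³. -/
def TE : (ℝ×ℝ×ℝ) ≃L[ℝ] (ℝ×ℝ×ℝ) :=
  (ContinuousLinearEquiv.neg ℝ).prodCongr (ContinuousLinearEquiv.refl ℝ (ℝ×ℝ))
def SE : (ℝ×ℝ×ℝ) ≃L[ℝ] (ℝ×ℝ×ℝ) :=
  (ContinuousLinearEquiv.refl ℝ ℝ).prodCongr
    ((ContinuousLinearEquiv.neg ℝ).prodCongr (ContinuousLinearEquiv.neg ℝ))
def T2E : (ℝ×ℝ×ℝ) ≃L[ℝ] (ℝ×ℝ×ℝ) :=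
  (ContinuousLinearEquiv.refl ℝ ℝ).prodCongr
    ((ContinuousLinearEquiv.neg ℝ).prodCongr (ContinuousLinearEquiv.refl ℝ ℝ))
def S2E : (ℝ×ℝ×ℝ) ≃L[ℝ] (ℝ×ℝ×ℝ) :=
  (ContinuousLinearEquiv.neg ℝ).prodCongr
    ((ContinuousLinearEquiv.refl ℝ ℝ).prodCongr (ContinuousLinearEquiv.neg ℝ))

@[simp] lemma TE_apply (a : ℝ×ℝ×ℝ) : TE a = (-a.1, a.2.1, a.2.2) := by simp [TE]
@[simp] lemma SE_apply (a : ℝ×ℝ×ℝ) : SE a = (a.1, -a.2.1, -a.2.2) := by simp [SE]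
@[simp] lemma T2E_apply (a : ℝ×ℝ×ℝ) : T2E a = (a.1, -a.2.1, a.2.2) := by simp [T2E]
@[simp] lemma S2E_apply (a : ℝ×ℝ×ℝ) : S2E a = (-a.1, a.2.1, -a.2.2) := by simp [S2E]

lemma pdU_clequiv (e : (ℝ×ℝ×ℝ) ≃L[ℝ] (ℝ×ℝ×ℝ)) (f : ℝ×ℝ → ℝ×ℝ×ℝ) (p : ℝ×ℝ) :
    pdU (fun q => e (f q)) p = e (pdU f p) := deriv_clequiv e _ _

lemma pdV_clequiv (e : (ℝ×ℝ×ℝ) ≃L[ℝ] (ℝ×ℝ×ℝ)) (f : ℝ×ℝ → ℝ×ℝ×ℝ) (p : ℝ×ℝ) :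
    pdV (fun q => e (f q)) p = e (pdV f p) := deriv_clequiv e _ _

/-- `pdU` of a `u`-reflected function. -/
lemma pdU_reflU (f : ℝ×ℝ → ℝ×ℝ×ℝ) (p : ℝ×ℝ) :
    pdU f (-p.1, p.2) = - pdU (fun q => f (-q.1, q.2)) p := by
  have h : deriv (fun x => f (-x, p.2)) p.1
      = - deriv (fun t => f (t, p.2)) (-p.1) :=
    deriv_comp_neg (f := fun t => f (t, p.2)) (x := p.1)
  show deriv (fun x => f (x, p.2)) (-p.1) = - deriv (fun x => f (-x, p.2)) p.1
  rw [h, neg_neg]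

lemma pdV_reflU (f : ℝ×ℝ → ℝ×ℝ×ℝ) (p : ℝ×ℝ) :
    pdV f (-p.1, p.2) = pdV (fun q => f (-q.1, q.2)) p := rfl

lemma pdU_reflV (f : ℝ×ℝ → ℝ×ℝ×ℝ) (p : ℝ×ℝ) :
    pdU f (p.1, -p.2) = pdU (fun q => f (q.1, -q.2)) p := rfl

lemma pdV_reflV (f : ℝ×ℝ → ℝ×ℝ×ℝ) (p : ℝ×ℝ) :
    pdV f (p.1, -p.2) = - pdV (fun q => f (q.1, -q.2)) p := by
  have h : deriv (fun y => f (p.1, -y)) p.2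
      = - deriv (fun t => f (p.1, t)) (-p.2) :=
    deriv_comp_neg (f := fun t => f (p.1, t)) (x := p.2)
  show deriv (fun y => f (p.1, y)) (-p.2) = - deriv (fun y => f (p.1, -y)) p.2
  rw [h, neg_neg]

/-! Symmetries of the Scherk parametrization. -/

lemma scherk_reflU (q : ℝ×ℝ) : scherk (-q.1, q.2) = TE (scherk q) := by
  simp only [scherk, TE_apply]
  refine Prod.ext ?_ (Prod.ext ?_ ?_)
  · show arctan (2 * -q.1 / ((-q.1) ^ 2 + q.2 ^ 2 - 1)) = -arctan _
    rw [← Real.arctan_neg]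
    ring_nf
  · show arctan (-2 * q.2 / ((-q.1) ^ 2 + q.2 ^ 2 - 1)) = arctan _
    ring_nf
  · show (1/2 : ℝ) * Real.log _ = (1/2 : ℝ) * Real.log _
    ring_nf

lemma scherk_reflV (q : ℝ×ℝ) : scherk (q.1, -q.2) = T2E (scherk q) := by
  simp only [scherk, T2E_apply]
  refine Prod.ext ?_ (Prod.ext ?_ ?_)
  · show arctan (2 * q.1 / (q.1 ^ 2 + (-q.2) ^ 2 - 1)) = arctan _
    ring_nf
  · show arctan (-2 * -q.2 / (q.1 ^ 2 + (-q.2) ^ 2 - 1)) = -arctan _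
    rw [← Real.arctan_neg]
    ring_nf
  · show (1/2 : ℝ) * Real.log _ = (1/2 : ℝ) * Real.log _
    ring_nf

lemma σu_reflU (p : ℝ×ℝ) : σu (-p.1, p.2) = SE (σu p) := by
  have h : σu (-p.1, p.2) = - pdU (fun q => TE (scherk q)) p := by
    rw [show σu (-p.1, p.2) = pdU scherk (-p.1, p.2) from rfl, pdU_reflU]
    congr 1
    exact congrArg (fun f => pdU f p) (funext fun q => scherk_reflU q)
  rw [h, pdU_clequiv]
  ext <;> simp [σu]

lemma σv_reflU (p : ℝ×ℝ) : σv (-p.1, p.2) = TE (σv p) := by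
  have h : σv (-p.1, p.2) = pdV (fun q => TE (scherk q)) p := by
    rw [show σv (-p.1, p.2) = pdV scherk (-p.1, p.2) from rfl, pdV_reflU]
    exact congrArg (fun f => pdV f p) (funext fun q => scherk_reflU q)
  rw [h, pdV_clequiv]; rfl

lemma σuu_reflU (p : ℝ×ℝ) : σuu (-p.1, p.2) = TE (σuu p) := by
  have h : σuu (-p.1, p.2) = - pdU (fun q => SE (σu q)) p := by
    rw [show σuu (-p.1, p.2) = pdU σu (-p.1, p.2) from rfl, pdU_reflU]
    congr 1
    exact congrArg (fun f => pdU f p) (funext fun q => σu_reflU q)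
  rw [h, pdU_clequiv]
  ext <;> simp [σuu]

lemma σuv_reflU (p : ℝ×ℝ) : σuv (-p.1, p.2) = SE (σuv p) := by
  have h : σuv (-p.1, p.2) = pdV (fun q => SE (σu q)) p := by
    rw [show σuv (-p.1, p.2) = pdV σu (-p.1, p.2) from rfl, pdV_reflU]
    exact congrArg (fun f => pdV f p) (funext fun q => σu_reflU q)
  rw [h, pdV_clequiv]; rfl

lemma σvv_reflU (p : ℝ×ℝ) : σvv (-p.1, p.2) = TE (σvv p) := by
  have h : σvv (-p.1, p.2) = pdV (fun q => TE (σv q)) p := by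
    rw [show σvv (-p.1, p.2) = pdV σv (-p.1, p.2) from rfl, pdV_reflU]
    exact congrArg (fun f => pdV f p) (funext fun q => σv_reflU q)
  rw [h, pdV_clequiv]; rfl

lemma σu_reflV (p : ℝ×ℝ) : σu (p.1, -p.2) = T2E (σu p) := by
  have h : σu (p.1, -p.2) = pdU (fun q => T2E (scherk q)) p := by
    rw [show σu (p.1, -p.2) = pdU scherk (p.1, -p.2) from rfl, pdU_reflV]
    exact congrArg (fun f => pdU f p) (funext fun q => scherk_reflV q)
  rw [h, pdU_clequiv]; rfl

lemma σv_reflV (p : ℝ×ℝ) : σv (p.1, -p.2) = S2E (σv p) := by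
  have h : σv (p.1, -p.2) = - pdV (fun q => T2E (scherk q)) p := by
    rw [show σv (p.1, -p.2) = pdV scherk (p.1, -p.2) from rfl, pdV_reflV]
    congr 1
    exact congrArg (fun f => pdV f p) (funext fun q => scherk_reflV q)
  rw [h, pdV_clequiv]
  ext <;> simp [σv]

lemma σuu_reflV (p : ℝ×ℝ) : σuu (p.1, -p.2) = T2E (σuu p) := by
  have h : σuu (p.1, -p.2) = pdU (fun q => T2E (σu q)) p := by
    rw [show σuu (p.1, -p.2) = pdU σu (p.1, -p.2) from rfl, pdU_reflV]
    exact congrArg (fun f => pdU f p) (funext fun q => σu_reflV q)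
  rw [h, pdU_clequiv]; rfl

lemma σuv_reflV (p : ℝ×ℝ) : σuv (p.1, -p.2) = S2E (σuv p) := by
  have h : σuv (p.1, -p.2) = - pdV (fun q => T2E (σu q)) p := by
    rw [show σuv (p.1, -p.2) = pdV σu (p.1, -p.2) from rfl, pdV_reflV]
    congr 1
    exact congrArg (fun f => pdV f p) (funext fun q => σu_reflV q)
  rw [h, pdV_clequiv]
  ext <;> simp [σuv]

lemma σvv_reflV (p : ℝ×ℝ) : σvv (p.1, -p.2) = T2E (σvv p) := by
  have h : σvv (p.1, -p.2) = - pdV (fun q => S2E (σv q)) p := by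
    rw [show σvv (p.1, -p.2) = pdV σv (p.1, -p.2) from rfl, pdV_reflV]
    congr 1
    exact congrArg (fun f => pdV f p) (funext fun q => σv_reflV q)
  rw [h, pdV_clequiv]
  ext <;> simp [σvv]

/-! Parity of the metric quantities. -/

lemma g11_reflU (p : ℝ×ℝ) : g11 (-p.1, p.2) = g11 p := by
  simp only [g11, σu_reflU, SE_apply, dot3]; ring
lemma g12_reflU (p : ℝ×ℝ) : g12 (-p.1, p.2) = -g12 p := by
  simp only [g12, σu_reflU, σv_reflU, SE_apply, TE_apply, dot3]; ring
lemma g22_reflU (p : ℝ×ℝ) : g22 (-p.1, p.2) = g22 p := by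
  simp only [g22, σv_reflU, TE_apply, dot3]; ring
lemma detg_reflU (p : ℝ×ℝ) : detg (-p.1, p.2) = detg p := by
  simp only [detg, g11_reflU, g12_reflU, g22_reflU]; ring
lemma ginv11_reflU (p : ℝ×ℝ) : ginv11 (-p.1, p.2) = ginv11 p := by
  simp only [ginv11, g22_reflU, detg_reflU]
lemma ginv12_reflU (p : ℝ×ℝ) : ginv12 (-p.1, p.2) = -ginv12 p := by
  simp only [ginv12, g12_reflU, detg_reflU, neg_neg, neg_div]
lemma ginv22_reflU (p : ℝ×ℝ) : ginv22 (-p.1, p.2) = ginv22 p := by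
  simp only [ginv22, g11_reflU, detg_reflU]

lemma NS_reflU (p : ℝ×ℝ) : NS (-p.1, p.2) = TE (NS p) := by
  have hc : cross3 (σu (-p.1, p.2)) (σv (-p.1, p.2))
      = TE (cross3 (σu p) (σv p)) := by
    simp only [σu_reflU, σv_reflU, SE_apply, TE_apply, cross3]
    refine Prod.ext ?_ (Prod.ext ?_ ?_) <;> simp <;> ring
  have hn : norm3 (TE (cross3 (σu p) (σv p))) = norm3 (cross3 (σu p) (σv p)) := by
    simp only [norm3, TE_apply, dot3]; ring_nf
  rw [NS, hc, hn]
  simp only [NS, TE_apply, Prod.smul_mk, smul_eq_mul]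
  refine Prod.ext ?_ (Prod.ext ?_ ?_) <;> simp <;> ring

lemma κ_reflU (p : ℝ×ℝ) : κ (-p.1, p.2) = κ p := by
  have h1 : h11 (-p.1, p.2) = h11 p := by
    simp only [h11, σuu_reflU, NS_reflU, TE_apply, dot3]; ring
  have h2 : h12 (-p.1, p.2) = -h12 p := by
    simp only [h12, σuv_reflU, NS_reflU, SE_apply, TE_apply, dot3]; ring
  have h3 : h22 (-p.1, p.2) = h22 p := by
    simp only [h22, σvv_reflU, NS_reflU, TE_apply, dot3]; ring
  simp only [κ, h1, h2, h3, detg_reflU]; ring_nf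

lemma g11_reflV (p : ℝ×ℝ) : g11 (p.1, -p.2) = g11 p := by
  simp only [g11, σu_reflV, T2E_apply, dot3]; ring
lemma g12_reflV (p : ℝ×ℝ) : g12 (p.1, -p.2) = -g12 p := by
  simp only [g12, σu_reflV, σv_reflV, S2E_apply, T2E_apply, dot3]; ring
lemma g22_reflV (p : ℝ×ℝ) : g22 (p.1, -p.2) = g22 p := by
  simp only [g22, σv_reflV, S2E_apply, dot3]; ring
lemma detg_reflV (p : ℝ×ℝ) : detg (p.1, -p.2) = detg p := by
  simp only [detg, g11_reflV, g12_reflV, g22_reflV]; ring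
lemma ginv11_reflV (p : ℝ×ℝ) : ginv11 (p.1, -p.2) = ginv11 p := by
  simp only [ginv11, g22_reflV, detg_reflV]
lemma ginv12_reflV (p : ℝ×ℝ) : ginv12 (p.1, -p.2) = -ginv12 p := by
  simp only [ginv12, g12_reflV, detg_reflV, neg_neg, neg_div]
lemma ginv22_reflV (p : ℝ×ℝ) : ginv22 (p.1, -p.2) = ginv22 p := by
  simp only [ginv22, g11_reflV, detg_reflV]

lemma NS_reflV (p : ℝ×ℝ) : NS (p.1, -p.2) = T2E (NS p) := by
  have hc : cross3 (σu (p.1, -p.2)) (σv (p.1, -p.2))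
      = T2E (cross3 (σu p) (σv p)) := by
    simp only [σu_reflV, σv_reflV, S2E_apply, T2E_apply, cross3]
    refine Prod.ext ?_ (Prod.ext ?_ ?_) <;> simp <;> ring
  have hn : norm3 (T2E (cross3 (σu p) (σv p))) = norm3 (cross3 (σu p) (σv p)) := by
    simp only [norm3, T2E_apply, dot3]; ring_nf
  rw [NS, hc, hn]
  simp only [NS, T2E_apply, Prod.smul_mk, smul_eq_mul]
  refine Prod.ext ?_ (Prod.ext ?_ ?_) <;> simp <;> ring

lemma κ_reflV (p : ℝ×ℝ) : κ (p.1, -p.2) = κ p := by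
  have h1 : h11 (p.1, -p.2) = h11 p := by
    simp only [h11, σuu_reflV, NS_reflV, T2E_apply, dot3]; ring
  have h2 : h12 (p.1, -p.2) = -h12 p := by
    simp only [h12, σuv_reflV, NS_reflV, S2E_apply, T2E_apply, dot3]; ring
  have h3 : h22 (p.1, -p.2) = h22 p := by
    simp only [h22, σvv_reflV, NS_reflV, T2E_apply, dot3]; ring
  simp only [κ, h1, h2, h3, detg_reflV]; ring_nf

/-! Derivatives of the test functions. -/

lemma pdU_Φ0 (p : ℝ×ℝ) : pdU (Φ 0) p = 2 * p.1 * p.2 ^ 2 := by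
  have h : HasDerivAt (fun x : ℝ => (x * p.2) ^ 2 + 2)
      (2 * (p.1 * p.2) ^ 1 * (1 * p.2)) p.1 :=
    (((hasDerivAt_id p.1).mul_const p.2).pow 2).add_const 2
  have := h.deriv
  show deriv (fun x : ℝ => (x * p.2) ^ 2 + 2) p.1 = _
  rw [this]; ring

lemma pdV_Φ0 (p : ℝ×ℝ) : pdV (Φ 0) p = 2 * p.1 ^ 2 * p.2 := by
  have h : HasDerivAt (fun y : ℝ => (p.1 * y) ^ 2 + 2)
      (2 * (p.1 * p.2) ^ 1 * (p.1 * 1)) p.2 :=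
    (((hasDerivAt_id p.2).const_mul p.1).pow 2).add_const 2
  have := h.deriv
  show deriv (fun y : ℝ => (p.1 * y) ^ 2 + 2) p.2 = _
  rw [this]; ring

lemma pdU_Φ1 (p : ℝ×ℝ) : pdU (Φ 1) p = 1 - 5 * p.1 ^ 4 / 4 := by
  have h : HasDerivAt (fun x : ℝ => x - x ^ 5 / 4)
      (1 - (5 * p.1 ^ 4 * 1) / 4) p.1 :=
    (hasDerivAt_id p.1).sub (((hasDerivAt_id p.1).pow 5).div_const 4)
  have := h.deriv
  show deriv (fun x : ℝ => x - x ^ 5 / 4) p.1 = _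
  rw [this]; ring

lemma pdV_Φ1 (p : ℝ×ℝ) : pdV (Φ 1) p = 0 := by
  show deriv (fun _ : ℝ => p.1 - p.1 ^ 5 / 4) p.2 = 0
  exact deriv_const _ _

lemma pdU_Φ2 (p : ℝ×ℝ) : pdU (Φ 2) p = 0 := by
  show deriv (fun _ : ℝ => p.2 - p.2 ^ 5 / 4) p.1 = 0
  exact deriv_const _ _

lemma pdV_Φ2 (p : ℝ×ℝ) : pdV (Φ 2) p = 1 - 5 * p.2 ^ 4 / 4 := by
  have h : HasDerivAt (fun y : ℝ => y - y ^ 5 / 4)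
      (1 - (5 * p.2 ^ 4 * 1) / 4) p.2 :=
    (hasDerivAt_id p.2).sub (((hasDerivAt_id p.2).pow 5).div_const 4)
  have := h.deriv
  show deriv (fun y : ℝ => y - y ^ 5 / 4) p.2 = _
  rw [this]; ring

lemma Φ0_apply (p : ℝ×ℝ) : Φ 0 p = (p.1 * p.2) ^ 2 + 2 := rfl
lemma Φ1_apply (p : ℝ×ℝ) : Φ 1 p = p.1 - p.1 ^ 5 / 4 := rfl
lemma Φ2_apply (p : ℝ×ℝ) : Φ 2 p = p.2 - p.2 ^ 5 / 4 := rfl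

/-! Vanishing of integrals of odd functions over `Ω₀`. -/

lemma refl1_measurePreserving :
    MeasurePreserving (fun p : ℝ×ℝ => (-p.1, p.2)) volume volume := by
  have := (Measure.measurePreserving_neg (volume : Measure ℝ)).prod
    (MeasurePreserving.id (volume : Measure ℝ))
  rw [Measure.volume_eq_prod]
  exact this

lemma refl2_measurePreserving :
    MeasurePreserving (fun p : ℝ×ℝ => (p.1, -p.2)) volume volume := by
  have := (MeasurePreserving.id (volume : Measure ℝ)).prod
    (Measure.measurePreserving_neg (volume : Measure ℝ))
  rw [Measure.volume_eq_prod]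
  exact this

lemma refl1_involutive : Function.Involutive (fun p : ℝ×ℝ => (-p.1, p.2)) := by
  intro p; simp

lemma refl2_involutive : Function.Involutive (fun p : ℝ×ℝ => (p.1, -p.2)) := by
  intro p; simp

lemma refl1_preimage : (fun p : ℝ×ℝ => (-p.1, p.2)) ⁻¹' Ω₀ = Ω₀ := by
  ext p
  simp only [Set.mem_preimage, Ω₀, Set.mem_prod, Set.mem_Ioo]
  constructor <;> rintro ⟨⟨h1, h2⟩, h3⟩ <;> exact ⟨⟨by linarith, by linarith⟩, h3⟩

lemma refl2_preimage : (fun p : ℝ×ℝ => (p.1, -p.2)) ⁻¹' Ω₀ = Ω₀ := by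
  ext p
  simp only [Set.mem_preimage, Ω₀, Set.mem_prod, Set.mem_Ioo]
  constructor <;> rintro ⟨h1, h2, h3⟩ <;> exact ⟨h1, by linarith, by linarith⟩

lemma integral_zero_of_oddU (f : ℝ×ℝ → ℝ) (hf : ∀ p, f (-p.1, p.2) = -f p) :
    ∫ p in Ω₀, f p = 0 := by
  have hemb : MeasurableEmbedding (fun p : ℝ×ℝ => (-p.1, p.2)) :=
    (MeasurableEquiv.ofInvolutive _ refl1_involutive
      refl1_measurePreserving.measurable).measurableEmbedding
  have key := refl1_measurePreserving.setIntegral_preimage_emb hemb f Ω₀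
  rw [refl1_preimage] at key
  have : ∫ p in Ω₀, f (-p.1, p.2) = ∫ p in Ω₀, (-f p) :=
    integral_congr_ae (Filter.Eventually.of_forall fun p => hf p)
  rw [this, integral_neg] at key
  linarith

lemma integral_zero_of_oddV (f : ℝ×ℝ → ℝ) (hf : ∀ p, f (p.1, -p.2) = -f p) :
    ∫ p in Ω₀, f p = 0 := by
  have hemb : MeasurableEmbedding (fun p : ℝ×ℝ => (p.1, -p.2)) :=
    (MeasurableEquiv.ofInvolutive _ refl2_involutive
      refl2_measurePreserving.measurable).measurableEmbedding
  have key := refl2_measurePreserving.setIntegral_preimage_emb hemb f Ω₀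
  rw [refl2_preimage] at key
  have : ∫ p in Ω₀, f (p.1, -p.2) = ∫ p in Ω₀, (-f p) :=
    integral_congr_ae (Filter.Eventually.of_forall fun p => hf p)
  rw [this, integral_neg] at key
  linarith

/-! The six orthogonality cases. -/

lemma B01 : B (Φ 0) (Φ 1) = 0 := by
  rw [B]
  apply integral_zero_of_oddU
  intro p
  have e1 := pdU_Φ0 (-p.1, p.2); have e2 := pdV_Φ0 (-p.1, p.2)
  have e3 := pdU_Φ1 (-p.1, p.2); have e4 := pdV_Φ1 (-p.1, p.2)
  simp only at e1 e2 e3 e4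
  rw [e1, e2, e3, e4, ginv11_reflU, ginv12_reflU, ginv22_reflU, κ_reflU, detg_reflU,
    Φ0_apply, Φ1_apply, Φ0_apply, Φ1_apply, pdU_Φ0, pdV_Φ0, pdU_Φ1, pdV_Φ1]
  simp only
  ring

lemma B02 : B (Φ 0) (Φ 2) = 0 := by
  rw [B]
  apply integral_zero_of_oddV
  intro p
  have e1 := pdU_Φ0 (p.1, -p.2); have e2 := pdV_Φ0 (p.1, -p.2)
  have e3 := pdU_Φ2 (p.1, -p.2); have e4 := pdV_Φ2 (p.1, -p.2)
  simp only at e1 e2 e3 e4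
  rw [e1, e2, e3, e4, ginv11_reflV, ginv12_reflV, ginv22_reflV, κ_reflV, detg_reflV,
    Φ0_apply, Φ2_apply, Φ0_apply, Φ2_apply, pdU_Φ0, pdV_Φ0, pdU_Φ2, pdV_Φ2]
  simp only
  ring

lemma B12 : B (Φ 1) (Φ 2) = 0 := by
  rw [B]
  apply integral_zero_of_oddU
  intro p
  have e1 := pdU_Φ1 (-p.1, p.2); have e2 := pdV_Φ1 (-p.1, p.2)
  have e3 := pdU_Φ2 (-p.1, p.2); have e4 := pdV_Φ2 (-p.1, p.2)
  simp only at e1 e2 e3 e4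
  rw [e1, e2, e3, e4, ginv11_reflU, ginv12_reflU, ginv22_reflU, κ_reflU, detg_reflU,
    Φ1_apply, Φ2_apply, Φ1_apply, Φ2_apply, pdU_Φ1, pdV_Φ1, pdU_Φ2, pdV_Φ2]
  simp only
  ring

lemma B10 : B (Φ 1) (Φ 0) = 0 := by
  rw [B]
  apply integral_zero_of_oddU
  intro p
  have e1 := pdU_Φ0 (-p.1, p.2); have e2 := pdV_Φ0 (-p.1, p.2)
  have e3 := pdU_Φ1 (-p.1, p.2); have e4 := pdV_Φ1 (-p.1, p.2)
  simp only at e1 e2 e3 e4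
  rw [e1, e2, e3, e4, ginv11_reflU, ginv12_reflU, ginv22_reflU, κ_reflU, detg_reflU,
    Φ0_apply, Φ1_apply, Φ0_apply, Φ1_apply, pdU_Φ0, pdV_Φ0, pdU_Φ1, pdV_Φ1]
  simp only
  ring

lemma B20 : B (Φ 2) (Φ 0) = 0 := by
  rw [B]
  apply integral_zero_of_oddV
  intro p
  have e1 := pdU_Φ0 (p.1, -p.2); have e2 := pdV_Φ0 (p.1, -p.2)
  have e3 := pdU_Φ2 (p.1, -p.2); have e4 := pdV_Φ2 (p.1, -p.2)
  simp only at e1 e2 e3 e4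
  rw [e1, e2, e3, e4, ginv11_reflV, ginv12_reflV, ginv22_reflV, κ_reflV, detg_reflV,
    Φ0_apply, Φ2_apply, Φ0_apply, Φ2_apply, pdU_Φ0, pdV_Φ0, pdU_Φ2, pdV_Φ2]
  simp only
  ring

lemma B21 : B (Φ 2) (Φ 1) = 0 := by
  rw [B]
  apply integral_zero_of_oddU
  intro p
  have e1 := pdU_Φ1 (-p.1, p.2); have e2 := pdV_Φ1 (-p.1, p.2)
  have e3 := pdU_Φ2 (-p.1, p.2); have e4 := pdV_Φ2 (-p.1, p.2)
  simp only at e1 e2 e3 e4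
  rw [e1, e2, e3, e4, ginv11_reflU, ginv12_reflU, ginv22_reflU, κ_reflU, detg_reflU,
    Φ1_apply, Φ2_apply, Φ1_apply, Φ2_apply, pdU_Φ1, pdV_Φ1, pdU_Φ2, pdV_Φ2]
  simp only
  ring

/-- the test functions `φ¹, φ², φ³` are pairwise orthogonal for the
polarized second-variation form of the fundamental Scherk surface. -/
theorem scherk_testFunctions_orthogonal :
    ∀ k m : Fin 3, k ≠ m → B (Φ k) (Φ m) = 0 := by
  intro k m hkm
  fin_cases k <;> fin_cases m <;> simp_all <;>
    first
      | exact B01 | exact B02 | exact B10 | exact B12 | exact B20 | exact B21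
end
end

section
/- The fundamental Scherk parametrization is an isothermal (conformal) immersion: at every (u,v) ∈ Ω₀ with u²+v² ≠ 1 one has σ_u·σ_v = 0 and σ_u·σ_u = σ_v·σ_v > 0. -/
noncomputable section
open MeasureTheory Real

lemma AB_pos (u v : ℝ) (hD : u^2+v^2-1 ≠ 0) :
    0 < (u^2+v^2-1)^2+4*u^2 ∧ 0 < (u^2+v^2-1)^2+4*v^2 := by
  have h2 : 0 < (u^2+v^2-1)^2 := by positivity
  constructor <;> nlinarith [sq_nonneg u, sq_nonneg v]

lemma sigma_u_eq (u v : ℝ) (hD : u^2+v^2-1 ≠ 0) :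
    σu (u,v) =
      (-2*(u^2-v^2+1)/((u^2+v^2-1)^2+4*u^2),
       4*u*v/((u^2+v^2-1)^2+4*v^2),
       2*u*(u^2+v^2+1)/((u^2+v^2-1)^2+4*u^2)
         - 2*u*(u^2+v^2-1)/((u^2+v^2-1)^2+4*v^2)) := by
  obtain ⟨hA, hB⟩ := AB_pos u v hD
  have hA' : ((u^2-v^2+1)^2+4*u^2*v^2 : ℝ) ≠ 0 := by nlinarith
  have hB' : ((u^2-v^2-1)^2+4*u^2*v^2 : ℝ) ≠ 0 := by nlinarith
  have hQ : ((u^2-v^2+1)^2+4*u^2*v^2) / ((u^2-v^2-1)^2+4*u^2*v^2) ≠ 0 :=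
    div_ne_zero hA' hB'
  have hden : HasDerivAt (fun x : ℝ => x^2+v^2-1) (2*u) u := by
    simpa using (((hasDerivAt_pow 2 u).add_const (v^2)).sub_const (1:ℝ))
  -- first component
  have hnum1 : HasDerivAt (fun x : ℝ => 2*x) 2 u := by
    simpa using (hasDerivAt_id u).const_mul (2:ℝ)
  have hg1 := hnum1.div hden hD
  have h1' := (Real.hasDerivAt_arctan (2*u/(u^2+v^2-1))).comp u hg1
  have h1 : HasDerivAt (fun x : ℝ => arctan (2*x/(x^2+v^2-1)))
      (-2*(u^2-v^2+1)/((u^2+v^2-1)^2+4*u^2)) u := by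
    refine h1'.congr_deriv ?_
    have h0 : (1 + (2*u/(u^2+v^2-1))^2) ≠ 0 := by positivity
    field_simp
    ring
  -- second component
  have hnum2 : HasDerivAt (fun _ : ℝ => -2*v) 0 u := hasDerivAt_const u _
  have hg2 := hnum2.div hden hD
  have h2' := (Real.hasDerivAt_arctan (-2*v/(u^2+v^2-1))).comp u hg2
  have h2 : HasDerivAt (fun x : ℝ => arctan (-2*v/(x^2+v^2-1)))
      (4*u*v/((u^2+v^2-1)^2+4*v^2)) u := by
    refine h2'.congr_deriv ?_
    have h0 : (1 + (-2*v/(u^2+v^2-1))^2) ≠ 0 := by positivity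
    field_simp
    ring
  -- third component
  have hAd : HasDerivAt (fun x : ℝ => (x^2-v^2+1)^2+4*x^2*v^2)
      (2*(u^2-v^2+1)^(2-1)*(2*u^(2-1)) + 4*u^(2-1)*2*v^2) u := by
    have t1 : HasDerivAt (fun x : ℝ => (x^2-v^2+1)^2)
        (2*(u^2-v^2+1)^(2-1)*(2*u^(2-1))) u := by
      have := (((hasDerivAt_pow 2 u).sub_const (v^2)).add_const (1:ℝ)).pow 2
      exact this.congr_deriv (by push_cast; ring)
    have t2 : HasDerivAt (fun x : ℝ => 4*x^2*v^2) (4*u^(2-1)*2*v^2) u := by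
      have := (((hasDerivAt_pow 2 u)).const_mul (4:ℝ)).mul_const (v^2)
      refine this.congr_deriv ?_
      try first | ring | (push_cast; ring)
    exact t1.add t2
  have hBd : HasDerivAt (fun x : ℝ => (x^2-v^2-1)^2+4*x^2*v^2)
      (2*(u^2-v^2-1)^(2-1)*(2*u^(2-1)) + 4*u^(2-1)*2*v^2) u := by
    have t1 : HasDerivAt (fun x : ℝ => (x^2-v^2-1)^2)
        (2*(u^2-v^2-1)^(2-1)*(2*u^(2-1))) u := by
      have := (((hasDerivAt_pow 2 u).sub_const (v^2)).sub_const (1:ℝ)).pow 2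
      exact this.congr_deriv (by push_cast; ring)
    have t2 : HasDerivAt (fun x : ℝ => 4*x^2*v^2) (4*u^(2-1)*2*v^2) u := by
      have := (((hasDerivAt_pow 2 u)).const_mul (4:ℝ)).mul_const (v^2)
      refine this.congr_deriv ?_
      try first | ring | (push_cast; ring)
    exact t1.add t2
  have hq := hAd.div hBd hB'
  have h3' := ((Real.hasDerivAt_log hQ).comp u hq).const_mul (1/2 : ℝ)
  have h3 : HasDerivAt (fun x : ℝ => (1/2) * Real.log (((x^2-v^2+1)^2+4*x^2*v^2)/((x^2-v^2-1)^2+4*x^2*v^2)))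
      (2*u*(u^2+v^2+1)/((u^2+v^2-1)^2+4*u^2)
         - 2*u*(u^2+v^2-1)/((u^2+v^2-1)^2+4*v^2)) u := by
    refine h3'.congr_deriv ?_
    have e1 := hA.ne'
    have e2 := hB.ne'
    norm_num
    field_simp
    have hAB := mul_ne_zero hA' hB'
    rw [div_eq_iff (fun h => hAB (by linear_combination h))]
    ring
  have h := h1.prodMk (h2.prodMk h3)
  have hfun : (fun x : ℝ => scherk (x, v)) =
      (fun x : ℝ => (arctan (2*x/(x^2+v^2-1)), arctan (-2*v/(x^2+v^2-1)),
        (1/2) * Real.log (((x^2-v^2+1)^2+4*x^2*v^2)/((x^2-v^2-1)^2+4*x^2*v^2)))) := rfl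
  show pdU scherk (u, v) = _
  rw [pdU, hfun]
  exact h.deriv

lemma sigma_v_eq (u v : ℝ) (hD : u^2+v^2-1 ≠ 0) :
    σv (u,v) =
      (-(4*u*v)/((u^2+v^2-1)^2+4*u^2),
       -2*(u^2-v^2-1)/((u^2+v^2-1)^2+4*v^2),
       2*v*(u^2+v^2-1)/((u^2+v^2-1)^2+4*u^2)
         - 2*v*(u^2+v^2+1)/((u^2+v^2-1)^2+4*v^2)) := by
  obtain ⟨hA, hB⟩ := AB_pos u v hD
  have hA' : ((u^2-v^2+1)^2+4*u^2*v^2 : ℝ) ≠ 0 := by nlinarith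
  have hB' : ((u^2-v^2-1)^2+4*u^2*v^2 : ℝ) ≠ 0 := by nlinarith
  have hQ : ((u^2-v^2+1)^2+4*u^2*v^2) / ((u^2-v^2-1)^2+4*u^2*v^2) ≠ 0 :=
    div_ne_zero hA' hB'
  have hden : HasDerivAt (fun y : ℝ => u^2+y^2-1) (2*v) v := by
    simpa using (((hasDerivAt_pow 2 v).const_add (u^2)).sub_const (1:ℝ))
  have hnum1 : HasDerivAt (fun _ : ℝ => 2*u) 0 v := hasDerivAt_const v _
  have hg1 := hnum1.div hden hD
  have h1' := (Real.hasDerivAt_arctan (2*u/(u^2+v^2-1))).comp v hg1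
  have h1 : HasDerivAt (fun y : ℝ => arctan (2*u/(u^2+y^2-1)))
      (-(4*u*v)/((u^2+v^2-1)^2+4*u^2)) v := by
    refine h1'.congr_deriv ?_
    have h0 : (1 + (2*u/(u^2+v^2-1))^2) ≠ 0 := by positivity
    field_simp
    ring
  have hnum2 : HasDerivAt (fun y : ℝ => -2*y) (-2) v := by
    simpa using (hasDerivAt_id v).const_mul (-2:ℝ)
  have hg2 := hnum2.div hden hD
  have h2' := (Real.hasDerivAt_arctan (-2*v/(u^2+v^2-1))).comp v hg2
  have h2 : HasDerivAt (fun y : ℝ => arctan (-2*y/(u^2+y^2-1)))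
      (-2*(u^2-v^2-1)/((u^2+v^2-1)^2+4*v^2)) v := by
    refine h2'.congr_deriv ?_
    have h0 : (1 + (-2*v/(u^2+v^2-1))^2) ≠ 0 := by positivity
    field_simp
    ring
  have hAd : HasDerivAt (fun y : ℝ => (u^2-y^2+1)^2+4*u^2*y^2)
      (2*(u^2-v^2+1)^(2-1)*(-(2*v^(2-1))) + 4*u^2*(2*v^(2-1))) v := by
    have t1 : HasDerivAt (fun y : ℝ => (u^2-y^2+1)^2)
        (2*(u^2-v^2+1)^(2-1)*(-(2*v^(2-1)))) v := by
      have := (((hasDerivAt_pow 2 v).const_sub (u^2)).add_const (1:ℝ)).pow 2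
      refine this.congr_deriv ?_
      try first | ring | (push_cast; ring)
    have t2 : HasDerivAt (fun y : ℝ => 4*u^2*y^2) (4*u^2*(2*v^(2-1))) v := by
      have := ((hasDerivAt_pow 2 v)).const_mul (4*u^2)
      refine this.congr_deriv ?_
      try first | ring | (push_cast; ring)
    exact t1.add t2
  have hBd : HasDerivAt (fun y : ℝ => (u^2-y^2-1)^2+4*u^2*y^2)
      (2*(u^2-v^2-1)^(2-1)*(-(2*v^(2-1))) + 4*u^2*(2*v^(2-1))) v := by
    have t1 : HasDerivAt (fun y : ℝ => (u^2-y^2-1)^2)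
        (2*(u^2-v^2-1)^(2-1)*(-(2*v^(2-1)))) v := by
      have := (((hasDerivAt_pow 2 v).const_sub (u^2)).sub_const (1:ℝ)).pow 2
      refine this.congr_deriv ?_
      try first | ring | (push_cast; ring)
    have t2 : HasDerivAt (fun y : ℝ => 4*u^2*y^2) (4*u^2*(2*v^(2-1))) v := by
      have := ((hasDerivAt_pow 2 v)).const_mul (4*u^2)
      refine this.congr_deriv ?_
      try first | ring | (push_cast; ring)
    exact t1.add t2
  have hq := hAd.div hBd hB'
  have h3' := ((Real.hasDerivAt_log hQ).comp v hq).const_mul (1/2 : ℝ)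
  have h3 : HasDerivAt (fun y : ℝ => (1/2) * Real.log (((u^2-y^2+1)^2+4*u^2*y^2)/((u^2-y^2-1)^2+4*u^2*y^2)))
      (2*v*(u^2+v^2-1)/((u^2+v^2-1)^2+4*u^2)
         - 2*v*(u^2+v^2+1)/((u^2+v^2-1)^2+4*v^2)) v := by
    refine h3'.congr_deriv ?_
    have e1 := hA.ne'
    have e2 := hB.ne'
    norm_num
    field_simp
    have hAB := mul_ne_zero hA' hB'
    rw [div_eq_iff (fun h => hAB (by linear_combination h))]
    ring
  have h := h1.prodMk (h2.prodMk h3)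
  have hfun : (fun y : ℝ => scherk (u, y)) =
      (fun y : ℝ => (arctan (2*u/(u^2+y^2-1)), arctan (-2*y/(u^2+y^2-1)),
        (1/2) * Real.log (((u^2-y^2+1)^2+4*u^2*y^2)/((u^2-y^2-1)^2+4*u^2*y^2)))) := rfl
  show pdV scherk (u, v) = _
  rw [pdV, hfun]
  exact h.deriv

/-- the fundamental Scherk parametrization is an isothermal (conformal)
immersion: `σ_u·σ_v = 0` and `σ_u·σ_u = σ_v·σ_v > 0` on `Ω₀` away from the unit circle. -/
theorem scherk_isothermal :
    ∀ p ∈ Ω₀, p.1 ^ 2 + p.2 ^ 2 ≠ 1 →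
      g12 p = 0 ∧ g11 p = g22 p ∧ 0 < g11 p := by
  rintro ⟨u, v⟩ ⟨hu, hv⟩ hne
  simp only [Set.mem_Ioo] at hu hv
  have hD : u^2 + v^2 - 1 ≠ 0 := sub_ne_zero.mpr hne
  obtain ⟨hA, hB⟩ := AB_pos u v hD
  have hAne : ((u^2+v^2-1)^2+4*u^2 : ℝ) ≠ 0 := ne_of_gt hA
  have hBne : ((u^2+v^2-1)^2+4*v^2 : ℝ) ≠ 0 := ne_of_gt hB
  have hsu := sigma_u_eq u v hD
  have hsv := sigma_v_eq u v hD
  refine ⟨?_, ?_, ?_⟩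
  · simp only [g12, dot3, hsu, hsv]
    field_simp
    ring
  · simp only [g11, g22, dot3, hsu, hsv]
    field_simp
    ring
  · simp only [g11, dot3, hsu]
    have ha : (-2*(u^2-v^2+1)/((u^2+v^2-1)^2+4*u^2)) < 0 := by
      apply div_neg_of_neg_of_pos _ hA
      nlinarith [sq_nonneg u, hv.1, hv.2]
    nlinarith [mul_pos_of_neg_of_neg ha ha,
      mul_self_nonneg (4*u*v/((u^2+v^2-1)^2+4*v^2)),
      mul_self_nonneg (2*u*(u^2+v^2+1)/((u^2+v^2-1)^2+4*u^2)
         - 2*u*(u^2+v^2-1)/((u^2+v^2-1)^2+4*v^2))]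
end
end

section
/- The fundamental Scherk surface is minimal: at every (u,v) ∈ Ω₀ with u²+v² ≠ 1 the parametrization is harmonic, σ_{uu} + σ_{vv} = 0, and its mean curvature vanishes, g₂₂h₁₁ − 2g₁₂h₁₂ + g₁₁h₂₂ = 0. -/
noncomputable section
open MeasureTheory Real

-- my defs
def myA (u v : ℝ) : ℝ := (u^2+v^2-1)^2 + 4*u^2
def myB (u v : ℝ) : ℝ := (u^2+v^2-1)^2 + 4*v^2
def Fu (u v : ℝ) : ℝ × ℝ × ℝ :=
  (2*(v^2-u^2-1)/myA u v, 4*u*v/myB u v,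
   2*u*(u^2+v^2+1)/myA u v - 2*u*(u^2+v^2-1)/myB u v)
def Fv (u v : ℝ) : ℝ × ℝ × ℝ :=
  (-(4*u*v)/myA u v, 2*(v^2-u^2+1)/myB u v,
   2*v*(u^2+v^2-1)/myA u v - 2*v*(u^2+v^2+1)/myB u v)

lemma myA_pos (u v : ℝ) (hD : u^2+v^2-1 ≠ 0) : 0 < myA u v := by
  have h : 0 < (u^2+v^2-1)^2 := by positivity
  have : (0:ℝ) ≤ 4*u^2 := by positivity
  unfold myA; linarith

lemma myB_pos (u v : ℝ) (hD : u^2+v^2-1 ≠ 0) : 0 < myB u v := by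
  have h : 0 < (u^2+v^2-1)^2 := by positivity
  have : (0:ℝ) ≤ 4*v^2 := by positivity
  unfold myB; linarith

lemma hasDerivAt_scherk_u (u v : ℝ) (hD : u^2+v^2-1 ≠ 0) :
    HasDerivAt (fun x => scherk (x, v)) (Fu u v) u := by
  have hA := (myA_pos u v hD).ne'
  have hB := (myB_pos u v hD).ne'
  have hPn : (u^2-v^2+1)^2 + 4*u^2*v^2 ≠ 0 := by
    have : (u^2-v^2+1)^2 + 4*u^2*v^2 = myA u v := by unfold myA; ring
    rw [this]; exact hA
  have hPd : (u^2-v^2-1)^2 + 4*u^2*v^2 ≠ 0 := by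
    have : (u^2-v^2-1)^2 + 4*u^2*v^2 = myB u v := by unfold myB; ring
    rw [this]; exact hB
  have hDen : HasDerivAt (fun x : ℝ => x^2 + v^2 - 1) (2*u) u := by
    simpa using ((hasDerivAt_pow 2 u).add_const (v^2)).sub_const 1
  have h1 : HasDerivAt (fun x : ℝ => 2*x/(x^2+v^2-1))
      ((2*1*(u^2+v^2-1) - 2*u*(2*u))/(u^2+v^2-1)^2) u :=
    ((hasDerivAt_id' u).const_mul 2).div hDen hD
  have h1' := h1.arctan
  have h2 : HasDerivAt (fun x : ℝ => -2*v/(x^2+v^2-1))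
      ((0*(u^2+v^2-1) - (-2*v)*(2*u))/(u^2+v^2-1)^2) u :=
    (hasDerivAt_const u (-2*v)).div hDen hD
  have h2' := h2.arctan
  have hn : HasDerivAt (fun x : ℝ => (x^2-v^2+1)^2 + 4*x^2*v^2)
      ((2:ℕ)*(u^2-v^2+1)^(2-1)*((2:ℕ)*u^(2-1)) + 4*((2:ℕ)*u^(2-1))*v^2) u :=
    ((((hasDerivAt_pow 2 u).sub_const (v^2)).add_const 1).pow 2).add
      (((hasDerivAt_pow 2 u).const_mul 4).mul_const (v^2))
  have hd : HasDerivAt (fun x : ℝ => (x^2-v^2-1)^2 + 4*x^2*v^2)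
      ((2:ℕ)*(u^2-v^2-1)^(2-1)*((2:ℕ)*u^(2-1)) + 4*((2:ℕ)*u^(2-1))*v^2) u :=
    ((((hasDerivAt_pow 2 u).sub_const (v^2)).sub_const 1).pow 2).add
      (((hasDerivAt_pow 2 u).const_mul 4).mul_const (v^2))
  have hq := hn.div hd hPd
  have hne : ((u^2-v^2+1)^2 + 4*u^2*v^2) / ((u^2-v^2-1)^2 + 4*u^2*v^2) ≠ 0 :=
    div_ne_zero hPn hPd
  have h3' := (hq.log hne).const_mul (1/2 : ℝ)
  have H := h1'.prodMk (h2'.prodMk h3')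
  have hgoal : HasDerivAt (fun x : ℝ =>
      (arctan (2*x/(x^2+v^2-1)), arctan (-2*v/(x^2+v^2-1)),
        (1/2 : ℝ) * Real.log (((x^2-v^2+1)^2 + 4*x^2*v^2)/((x^2-v^2-1)^2 + 4*x^2*v^2))))
      (Fu u v) u := by
    convert H using 1
    · rfl
    have h1plus : 1 + (2*u/(u^2+v^2-1))^2 ≠ 0 := by positivity
    unfold Fu
    simp only [Pi.div_apply, Pi.add_apply, Pi.sub_apply, Pi.mul_apply, Pi.pow_apply, Pi.neg_apply]
    refine Prod.ext ?_ (Prod.ext ?_ ?_)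
    · show 2*(v^2-u^2-1)/myA u v = _
      unfold myA at hA ⊢
      field_simp
      ring
    · show 4*u*v/myB u v = _
      unfold myB at hB ⊢
      field_simp
      ring
    · show 2*u*(u^2+v^2+1)/myA u v - 2*u*(u^2+v^2-1)/myB u v = _
      unfold myA at hA ⊢; unfold myB at hB ⊢
      dsimp only
      rw [show (u^2-v^2+1)^2+4*u^2*v^2 = (u^2+v^2-1)^2+4*u^2 by ring,
        show (u^2-v^2-1)^2+4*u^2*v^2 = (u^2+v^2-1)^2+4*v^2 by ring]
      field_simp
      ring
  exact hgoal

lemma hasDerivAt_scherk_v (u v : ℝ) (hD : u^2+v^2-1 ≠ 0) :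
    HasDerivAt (fun y => scherk (u, y)) (Fv u v) v := by
  have hA := (myA_pos u v hD).ne'
  have hB := (myB_pos u v hD).ne'
  have hPn : (u^2-v^2+1)^2 + 4*u^2*v^2 ≠ 0 := by
    have : (u^2-v^2+1)^2 + 4*u^2*v^2 = myA u v := by unfold myA; ring
    rw [this]; exact hA
  have hPd : (u^2-v^2-1)^2 + 4*u^2*v^2 ≠ 0 := by
    have : (u^2-v^2-1)^2 + 4*u^2*v^2 = myB u v := by unfold myB; ring
    rw [this]; exact hB
  have hDen : HasDerivAt (fun y : ℝ => u^2 + y^2 - 1) (2*v) v := by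
    simpa using ((hasDerivAt_pow 2 v).const_add (u^2)).sub_const 1
  have h1' := ((hasDerivAt_const v (2*u)).div hDen hD).arctan
  have h2' := (((hasDerivAt_id' v).const_mul (-2)).div hDen hD).arctan
  have hn := ((((hasDerivAt_pow 2 v).const_sub (u^2)).add_const 1).pow 2).add
      ((hasDerivAt_pow 2 v).const_mul (4*u^2))
  have hd := ((((hasDerivAt_pow 2 v).const_sub (u^2)).sub_const 1).pow 2).add
      ((hasDerivAt_pow 2 v).const_mul (4*u^2))
  have hq := hn.div hd hPd
  have hne : ((u^2-v^2+1)^2 + 4*u^2*v^2) / ((u^2-v^2-1)^2 + 4*u^2*v^2) ≠ 0 :=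
    div_ne_zero hPn hPd
  have h3' := (hq.log hne).const_mul (1/2 : ℝ)
  have H := h1'.prodMk (h2'.prodMk h3')
  have hgoal : HasDerivAt (fun y : ℝ =>
      (arctan (2*u/(u^2+y^2-1)), arctan (-2*y/(u^2+y^2-1)),
        (1/2 : ℝ) * Real.log (((u^2-y^2+1)^2 + 4*u^2*y^2)/((u^2-y^2-1)^2 + 4*u^2*y^2))))
      (Fv u v) v := by
    convert H using 1
    · rfl
    have h1plus : 1 + (2*u/(u^2+v^2-1))^2 ≠ 0 := by positivity
    have h2plus : 1 + (-2*v/(u^2+v^2-1))^2 ≠ 0 := by positivity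
    unfold Fv
    simp only [Pi.div_apply, Pi.add_apply, Pi.sub_apply, Pi.mul_apply, Pi.pow_apply, Pi.neg_apply]
    refine Prod.ext ?_ (Prod.ext ?_ ?_)
    · show -(4*u*v)/myA u v = _
      unfold myA at hA ⊢
      field_simp
      ring
    · show 2*(v^2-u^2+1)/myB u v = _
      unfold myB at hB ⊢
      field_simp
      ring
    · show 2*v*(u^2+v^2-1)/myA u v - 2*v*(u^2+v^2+1)/myB u v = _
      unfold myA at hA ⊢; unfold myB at hB ⊢
      dsimp only
      rw [show (u^2-v^2+1)^2+4*u^2*v^2 = (u^2+v^2-1)^2+4*u^2 by ring,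
        show (u^2-v^2-1)^2+4*u^2*v^2 = (u^2+v^2-1)^2+4*v^2 by ring]
      field_simp
      ring
  exact hgoal

lemma sigma_u_eq_s12 (u v : ℝ) (hD : u^2+v^2-1 ≠ 0) : σu (u,v) = Fu u v :=
  (hasDerivAt_scherk_u u v hD).deriv

lemma sigma_v_eq_s12 (u v : ℝ) (hD : u^2+v^2-1 ≠ 0) : σv (u,v) = Fv u v :=
  (hasDerivAt_scherk_v u v hD).deriv



set_option maxHeartbeats 2000000 in
/-- the fundamental Scherk surface is minimal: the parametrization is
harmonic, `σ_uu + σ_vv = 0`, and its mean curvature vanishes,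
`g₂₂h₁₁ − 2g₁₂h₁₂ + g₁₁h₂₂ = 0`, on `Ω₀` away from the unit circle. -/
theorem scherk_minimal :
    ∀ p ∈ Ω₀, p.1 ^ 2 + p.2 ^ 2 ≠ 1 →
      σuu p + σvv p = 0 ∧
      g22 p * h11 p - 2 * g12 p * h12 p + g11 p * h22 p = 0 := by
  rintro ⟨u, v⟩ hp hne
  have hD : u^2+v^2-1 ≠ 0 := sub_ne_zero.mpr (by simpa using hne)
  have hA := (myA_pos u v hD).ne'
  have hB := (myB_pos u v hD).ne'
  have hA' : (u^2+v^2-1)^2+4*u^2 ≠ 0 := by unfold myA at hA; exact hA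
  have hB' : (u^2+v^2-1)^2+4*v^2 ≠ 0 := by unfold myB at hB; exact hB
  have hevu : (fun x => σu (x, v)) =ᶠ[nhds u] (fun x => Fu x v) := by
    have hc : ContinuousAt (fun x : ℝ => x^2+v^2-1) u := by fun_prop
    filter_upwards [hc.eventually_ne hD] with x hx
    exact sigma_u_eq_s12 x v hx
  have hevv : (fun y => σv (u, y)) =ᶠ[nhds v] (fun y => Fv u y) := by
    have hc : ContinuousAt (fun y : ℝ => u^2+y^2-1) v := by fun_prop
    filter_upwards [hc.eventually_ne hD] with y hy
    exact sigma_v_eq_s12 u y hy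
  -- derivative of the Fu slice in x at u
  have hAx := ((((hasDerivAt_pow 2 u).add_const (v^2)).sub_const 1).pow 2).add
      ((hasDerivAt_pow 2 u).const_mul 4)
  have hBx := (((((hasDerivAt_pow 2 u).add_const (v^2)).sub_const 1).pow 2)).add_const (4*v^2)
  have c1 := ((((hasDerivAt_pow 2 u).const_sub (v^2)).sub_const 1).const_mul 2).div hAx hA'
  have c2 := (((hasDerivAt_id' u).const_mul 4).mul_const v).div hBx hB'
  have c3 := ((((hasDerivAt_id' u).const_mul 2).mul
      (((hasDerivAt_pow 2 u).add_const (v^2)).add_const 1)).div hAx hA').sub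
    ((((hasDerivAt_id' u).const_mul 2).mul
      (((hasDerivAt_pow 2 u).add_const (v^2)).sub_const 1)).div hBx hB')
  have Huu : HasDerivAt (fun x => Fu x v) _ u := c1.prodMk (c2.prodMk c3)
  have euu := hevu.deriv_eq.trans Huu.deriv
  -- derivative of the Fv slice in y at v
  have hAy := (((((hasDerivAt_pow 2 v).const_add (u^2)).sub_const 1).pow 2)).add_const (4*u^2)
  have hBy := ((((hasDerivAt_pow 2 v).const_add (u^2)).sub_const 1).pow 2).add
      ((hasDerivAt_pow 2 v).const_mul 4)
  have d1 := ((((hasDerivAt_id' v).const_mul (4*u)).neg)).div hAy hA'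
  have d2 := ((((hasDerivAt_pow 2 v).sub_const (u^2)).add_const 1).const_mul 2).div hBy hB'
  have d3 := ((((hasDerivAt_id' v).const_mul 2).mul
      (((hasDerivAt_pow 2 v).const_add (u^2)).sub_const 1)).div hAy hA').sub
    ((((hasDerivAt_id' v).const_mul 2).mul
      (((hasDerivAt_pow 2 v).const_add (u^2)).add_const 1)).div hBy hB')
  have Hvv : HasDerivAt (fun y => Fv u y) _ v := d1.prodMk (d2.prodMk d3)
  have evv := hevv.deriv_eq.trans Hvv.deriv
  have hsum : σuu (u, v) + σvv (u, v) = 0 := by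
    show deriv (fun x => σu (x, v)) u + deriv (fun y => σv (u, y)) v = 0
    rw [euu, evv]
    simp only [Prod.mk_add_mk, Prod.mk_eq_zero, Pi.div_apply, Pi.add_apply, Pi.sub_apply, Pi.mul_apply, Pi.pow_apply, Pi.neg_apply]
    refine ⟨?_, ?_, ?_⟩
    · field_simp
      ring
    · field_simp
      ring
    · field_simp
      ring
  refine ⟨hsum, ?_⟩
  have hσu : σu (u,v) = Fu u v := sigma_u_eq_s12 u v hD
  have hσv : σv (u,v) = Fv u v := sigma_v_eq_s12 u v hD
  have hg12 : g12 (u,v) = 0 := by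
    simp only [g12, hσu, hσv, Fu, Fv, dot3, myA, myB]
    field_simp
    ring
  have hgeq : g11 (u,v) = g22 (u,v) := by
    simp only [g11, g22, hσu, hσv, Fu, Fv, dot3, myA, myB]
    field_simp
    ring
  have hvvneg : σvv (u,v) = -σuu (u,v) := eq_neg_of_add_eq_zero_right hsum
  have hh : h22 (u,v) = -h11 (u,v) := by
    simp only [h22, h11, hvvneg, dot3, Prod.fst_neg, Prod.snd_neg]
    ring
  rw [hh, hg12, ← hgeq]
  ring
end
end
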